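/- Let n be a positive integer and let θ be a parity-preserving partition in NC(2n) which has exactly two outer blocks. Then there exists a unique partition π ∈ NC(n) such that θ ≪ π^(odd) ∪ K(π)^(even). -/

import Mathlib

open Finset

attribute [local instance] Classical.propDecidable

open scoped ComplexOrder

namespace BBP

/-- Partitions of `{1,…,m}` modeled as `Finpartition`s of `univ : Finset (Fin m)`. -/
abbrev FP (m : ℕ) := Finpartition (Finset.univ : Finset (Fin m))

noncomputable instance (m : ℕ) : Fintype (FP m) :=
  Fintype.ofInjective (fun π : FP m => π.parts) fun a b h => by
    cases a; cases b; simpa using h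

/-- `x` is the minimum of the set `C`. -/
def IsMinOf {m : ℕ} (x : Fin m) (C : Finset (Fin m)) : Prop :=
  x ∈ C ∧ ∀ y ∈ C, x ≤ y

/-- `x` is the maximum of the set `C`. -/
def IsMaxOf {m : ℕ} (x : Fin m) (C : Finset (Fin m)) : Prop :=
  x ∈ C ∧ ∀ y ∈ C, y ≤ x

/-- `a` and `b` lie in one block of `π`. -/
def SameBlock {m : ℕ} (π : FP m) (a b : Fin m) : Prop :=
  ∃ B ∈ π.parts, a ∈ B ∧ b ∈ B

/-- `π` is non-crossing: if `i<j<k<l`, `i,k` in one block and `j,l` in one block,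
then all of them are in one block. -/
def IsNC {m : ℕ} (π : FP m) : Prop :=
  ∀ i j k l : Fin m, i < j → j < k → k < l →
    SameBlock π i k → SameBlock π j l → SameBlock π i j

/-- `A` embraces `B` : `min A ≤ min B` and `max B ≤ max A`. -/
def Embraces {m : ℕ} (A B : Finset (Fin m)) : Prop :=
  ∃ a₁ a₂ b₁ b₂ : Fin m, IsMinOf a₁ A ∧ IsMaxOf a₂ A ∧ IsMinOf b₁ B ∧ IsMaxOf b₂ B ∧
    a₁ ≤ b₁ ∧ b₂ ≤ a₂

/-- `B` strictly embraces `A` : `min B < min A` and `max A < max B`. -/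
def StrictlyEmbraces {m : ℕ} (B A : Finset (Fin m)) : Prop :=
  ∃ b₁ b₂ a₁ a₂ : Fin m, IsMinOf b₁ B ∧ IsMaxOf b₂ B ∧ IsMinOf a₁ A ∧ IsMaxOf a₂ A ∧
    b₁ < a₁ ∧ a₂ < b₂

/-- `A` is an outer block of `π`. -/
def IsOuter {m : ℕ} (π : FP m) (A : Finset (Fin m)) : Prop :=
  A ∈ π.parts ∧ ¬ ∃ B ∈ π.parts, StrictlyEmbraces B A

/-- The number `|π|_out` of outer blocks of `π`. -/
noncomputable def numOuter {m : ℕ} (π : FP m) : ℕ :=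
  (π.parts.filter fun A => IsOuter π A).card

/-- Reversed refinement order: every block of `ρ` is a union of blocks of `π`. -/
def Refines {m : ℕ} (π ρ : FP m) : Prop :=
  ∀ B ∈ π.parts, ∃ C ∈ ρ.parts, B ⊆ C

/-- The partial order `π ≪ ρ`. -/
def Ll {m : ℕ} (π ρ : FP m) : Prop :=
  Refines π ρ ∧
    ∀ C ∈ ρ.parts, ∃ B ∈ π.parts, ∃ x y : Fin m,
      IsMinOf x C ∧ IsMaxOf y C ∧ x ∈ B ∧ y ∈ B

/-- The partition `1ₙ` of `{1,…,n+1}` with a single block. -/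
noncomputable def fullPart (n : ℕ) : FP (n+1) :=
  Finpartition.indiscrete (by simpa using (Finset.univ_nonempty (α := Fin (n+1))).ne_empty)

/-- `π` is an interval partition. -/
def IsIntervalPartition {m : ℕ} (π : FP m) : Prop :=
  ∀ B ∈ π.parts, ∀ x ∈ B, ∀ z ∈ B, ∀ y : Fin m, x ≤ y → y ≤ z → y ∈ B

/-- `σ` is the permutation associated to `π` : on each block `{b₁ < ⋯ < b_q}` it is the
cycle `b₁ ↦ b₂ ↦ ⋯ ↦ b_q ↦ b₁`. -/
def IsAssocPerm {m : ℕ} (π : FP m) (σ : Equiv.Perm (Fin m)) : Prop :=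
  ∀ B ∈ π.parts, ∀ b ∈ B, σ b ∈ B ∧
    ((b < σ b ∧ ∀ x ∈ B, b < x → σ b ≤ x) ∨ (IsMaxOf b B ∧ IsMinOf (σ b) B))

/-- `κ` is the Kreweras complement of `π`, characterized by `P_κ = P_π⁻¹ ∘ P_{1ₙ}`,
where `P_{1ₙ}` is the cycle `1 ↦ 2 ↦ ⋯ ↦ n ↦ 1` (i.e. `finRotate`). -/
def IsKrewerasPair {m : ℕ} (π κ : FP m) : Prop :=
  ∃ σπ σκ : Equiv.Perm (Fin m), IsAssocPerm π σπ ∧ IsAssocPerm κ σκ ∧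
    σκ = σπ⁻¹ * finRotate m

/-- the element `2a-1` of `{1,…,2n}`, in `Fin (2n)` (0-indexed). -/
def oddEmb {n : ℕ} (a : Fin n) : Fin (2*n) := ⟨2*a.val, by have := a.isLt; omega⟩

/-- the element `2a` of `{1,…,2n}`, in `Fin (2n)` (0-indexed). -/
def evenEmb {n : ℕ} (a : Fin n) : Fin (2*n) := ⟨2*a.val + 1, by have := a.isLt; omega⟩

/-- `θ = π^(odd) ∪ ρ^(even)` : the blocks of `θ` are the sets `{2a-1 : a ∈ A}` for `A`
a block of `π` and the sets `{2b : b ∈ B}` for `B` a block of `ρ`. -/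
def IsOddEvenJoin {n : ℕ} (π ρ : FP n) (θ : FP (2*n)) : Prop :=
  θ.parts = π.parts.image (fun B => B.image oddEmb) ∪
    ρ.parts.image (fun B => B.image evenEmb)

/-- a block consisting of odd elements of `{1,…,2n}` (even 0-indexed values). -/
def OddBlock {m : ℕ} (B : Finset (Fin m)) : Prop := ∀ x ∈ B, x.val % 2 = 0

/-- a block consisting of even elements of `{1,…,2n}` (odd 0-indexed values). -/
def EvenBlock {m : ℕ} (B : Finset (Fin m)) : Prop := ∀ x ∈ B, x.val % 2 = 1

/-- every block of `θ` is contained in the odds or in the evens. -/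
def ParityPreserving {m : ℕ} (θ : FP m) : Prop :=
  ∀ B ∈ θ.parts, OddBlock B ∨ EvenBlock B

def OppositeParity {m : ℕ} (A B : Finset (Fin m)) : Prop :=
  (OddBlock A ∧ EvenBlock B) ∨ (EvenBlock A ∧ OddBlock B)

def SameParity {m : ℕ} (A B : Finset (Fin m)) : Prop :=
  (OddBlock A ∧ OddBlock B) ∨ (EvenBlock A ∧ EvenBlock B)

/-- `P = Parent_θ(A)` : the unique block `P ≠ A` of `θ` embracing `A` such that every
block `A' ≠ A` of `θ` embracing `A` also embraces `P`. -/
def IsParent {m : ℕ} (θ : FP m) (A P : Finset (Fin m)) : Prop :=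
  P ∈ θ.parts ∧ P ≠ A ∧ Embraces P A ∧
    ∀ A' ∈ θ.parts, A' ≠ A → Embraces A' A → Embraces A' P

/-- `θ` has exactly two outer blocks. -/
def ExactlyTwoOuterBlocks {m : ℕ} (θ : FP m) : Prop :=
  ∃ M ∈ θ.parts, ∃ N ∈ θ.parts, M ≠ N ∧ IsOuter θ M ∧ IsOuter θ N ∧
    ∀ A ∈ θ.parts, IsOuter θ A → A = M ∨ A = N

/-- A series in `ℂ₀⟨⟨z₁,…,z_k⟩⟩`, given by its family of coefficients: `f n w` is the
coefficient of `z_{w 0} z_{w 1} ⋯ z_{w n}` (a word of length `n+1 ≥ 1`). -/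
abbrev NCSeries (k : ℕ) := (n : ℕ) → (Fin (n+1) → Fin k) → ℂ

/-- The coefficient `Cf_{w|B}(f)` of the restriction of the word `w` to the set `B`,
listing the elements of `B` in increasing order.  (Equals `1` for `B = ∅`.) -/
noncomputable def partCoeff {k m : ℕ} (f : NCSeries k) (w : Fin (m+1) → Fin k)
    (B : Finset (Fin (m+1))) : ℂ :=
  if h : B.Nonempty then
    f (B.card - 1) (fun j =>
      w ((B.orderIsoOfFin (Nat.succ_pred_eq_of_pos (Finset.card_pos.mpr h)).symm j).1))
  else 1

/-- The generalized coefficient `Cf_{w;π}(f) = ∏_{B block of π} Cf_{w|B}(f)`. -/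
noncomputable def genCoeff {k m : ℕ} (f : NCSeries k) (w : Fin (m+1) → Fin k)
    (π : FP (m+1)) : ℂ :=
  ∏ B ∈ π.parts, partCoeff f w B

/-- Linear functionals on `ℂ⟨X₁,…,X_k⟩`. -/
abbrev Dist (k : ℕ) := FreeAlgebra ℂ (Fin k) →ₗ[ℂ] ℂ

/-- `μ ∈ D_alg(k)` : `μ` is normalized by `μ(1) = 1`. -/
def IsDalg {k : ℕ} (μ : Dist k) : Prop := μ 1 = 1

/-- The moment series `M_μ`, with `(momentSeries μ) n w = μ (X_{w 0} ⋯ X_{w n})`. -/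
noncomputable def momentSeries {k : ℕ} (μ : Dist k) : NCSeries k :=
  fun _ w => μ ((List.ofFn fun j => FreeAlgebra.ι ℂ (w j)).prod)

/-- `f = R_μ` : the moments of `μ` are obtained from `f` by summation over all
non-crossing partitions. -/
def IsRTransform {k : ℕ} (μ : Dist k) (f : NCSeries k) : Prop :=
  ∀ (n : ℕ) (w : Fin (n+1) → Fin k),
    momentSeries μ n w = ∑ π : FP (n+1), if IsNC π then genCoeff f w π else 0

/-- `g = η_μ` : the moments of `μ` are obtained from `g` by summation over all
interval partitions. -/
def IsEtaSeries {k : ℕ} (μ : Dist k) (g : NCSeries k) : Prop :=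
  ∀ (n : ℕ) (w : Fin (n+1) → Fin k),
    momentSeries μ n w = ∑ π : FP (n+1), if IsIntervalPartition π then genCoeff g w π else 0

/-- `μ ∈ D_c(k)` : `μ` is the joint distribution of a `k`-tuple of selfadjoint elements
with respect to a state on a unital C*-algebra. -/
def IsDc {k : ℕ} (μ : Dist k) : Prop :=
  IsDalg μ ∧
  ∃ (A : Type) (_ : NormedRing A) (_ : StarRing A) (_ : CStarRing A)
    (_ : NormedAlgebra ℂ A) (_ : StarModule ℂ A) (_ : CompleteSpace A)
    (φ : A →ₗ[ℂ] ℂ) (x : Fin k → A),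
      φ 1 = 1 ∧ (∀ a : A, 0 ≤ φ (star a * a)) ∧ (∀ i, IsSelfAdjoint (x i)) ∧
      ∀ (n : ℕ) (w : Fin (n+1) → Fin k),
        momentSeries μ n w = φ ((List.ofFn fun j => x (w j)).prod)

/-- convergence in moments. -/
def ConvInMoments {k : ℕ} (μseq : ℕ → Dist k) (μ : Dist k) : Prop :=
  ∀ P : FreeAlgebra ℂ (Fin k),
    Filter.Tendsto (fun N => μseq N P) Filter.atTop (nhds (μ P))

/-- coefficientwise convergence of series. -/
def ConvCoeffwise {k : ℕ} (fseq : ℕ → NCSeries k) (f : NCSeries k) : Prop :=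
  ∀ (n : ℕ) (w : Fin (n+1) → Fin k),
    Filter.Tendsto (fun N => fseq N n w) Filter.atTop (nhds (f n w))

/-- `ν` is the `p`-fold free additive convolution `μ ⊞ ⋯ ⊞ μ`, i.e. `R_ν = p · R_μ`. -/
def IsNFoldFree {k : ℕ} (p : ℕ) (μ ν : Dist k) : Prop :=
  ∃ f : NCSeries k, IsRTransform μ f ∧ IsRTransform ν (fun n w => (p : ℂ) * f n w)

/-- `ν` is the `p`-fold Boolean convolution `μ ⊎ ⋯ ⊎ μ`, i.e. `η_ν = p · η_μ`. -/
def IsNFoldBool {k : ℕ} (p : ℕ) (μ ν : Dist k) : Prop :=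
  ∃ g : NCSeries k, IsEtaSeries μ g ∧ IsEtaSeries ν (fun n w => (p : ℂ) * g n w)

/-- `ν = 𝔹(μ)` : the Boolean Bercovici–Pata bijection, `R_{𝔹(μ)} = η_μ`. -/
def IsBP {k : ℕ} (μ ν : Dist k) : Prop :=
  ∃ f : NCSeries k, IsEtaSeries μ f ∧ IsRTransform ν f

/-- `μ ∈ D_c(k)` is infinitely divisible with respect to `⊞`. -/
def IsInfDiv {k : ℕ} (μ : Dist k) : Prop :=
  IsDc μ ∧ ∀ N : ℕ, 0 < N → ∃ ν : Dist k, IsDc ν ∧ IsNFoldFree N ν μ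

/-- `g = Reta(f)`, i.e. there is `μ ∈ D_alg(k)` with `f = R_μ` and `g = η_μ`. -/
def RetaRel {k : ℕ} (f g : NCSeries k) : Prop :=
  ∃ μ : Dist k, IsDalg μ ∧ IsRTransform μ f ∧ IsEtaSeries μ g




/-! ## Auxiliary development for Statement 17 -/

variable {m : ℕ}

/-! ### Basic block utilities -/

noncomputable def blk (ψ : FP m) (x : Fin m) : Finset (Fin m) :=
  (ψ.exists_mem (mem_univ x)).choose

lemma blk_mem (ψ : FP m) (x : Fin m) : blk ψ x ∈ ψ.parts :=
  (ψ.exists_mem (mem_univ x)).choose_spec.1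

lemma mem_blk (ψ : FP m) (x : Fin m) : x ∈ blk ψ x :=
  (ψ.exists_mem (mem_univ x)).choose_spec.2

lemma blk_eq_of_mem {ψ : FP m} {B : Finset (Fin m)} {x : Fin m}
    (hB : B ∈ ψ.parts) (hx : x ∈ B) : blk ψ x = B :=
  ψ.eq_of_mem_parts (blk_mem ψ x) hB (mem_blk ψ x) hx

lemma sameBlock_iff {ψ : FP m} {a b : Fin m} :
    SameBlock ψ a b ↔ blk ψ a = blk ψ b := by
  constructor
  · rintro ⟨B, hB, ha, hb⟩
    rw [blk_eq_of_mem hB ha, blk_eq_of_mem hB hb]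
  · intro h
    exact ⟨blk ψ a, blk_mem ψ a, mem_blk ψ a, h ▸ mem_blk ψ b⟩

lemma parts_nonempty {ψ : FP m} {B : Finset (Fin m)} (hB : B ∈ ψ.parts) : B.Nonempty :=
  ψ.nonempty_of_mem_parts hB

/-! ### min / max -/

lemma isMinOf_min' {B : Finset (Fin m)} (h : B.Nonempty) : IsMinOf (B.min' h) B :=
  ⟨B.min'_mem h, fun y hy => B.min'_le y hy⟩

lemma isMaxOf_max' {B : Finset (Fin m)} (h : B.Nonempty) : IsMaxOf (B.max' h) B :=
  ⟨B.max'_mem h, fun y hy => B.le_max' y hy⟩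

lemma isMinOf_iff {B : Finset (Fin m)} (h : B.Nonempty) {x : Fin m} :
    IsMinOf x B ↔ x = B.min' h := by
  constructor
  · rintro ⟨hx, hmin⟩
    exact le_antisymm (hmin _ (B.min'_mem h)) (B.min'_le x hx)
  · rintro rfl; exact isMinOf_min' h

lemma isMaxOf_iff {B : Finset (Fin m)} (h : B.Nonempty) {x : Fin m} :
    IsMaxOf x B ↔ x = B.max' h := by
  constructor
  · rintro ⟨hx, hmax⟩
    exact le_antisymm (B.le_max' x hx) (hmax _ (B.max'_mem h))
  · rintro rfl; exact isMaxOf_max' h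

/-! ### crossing and nesting -/

lemma cross {ψ : FP m} (hNC : IsNC ψ) {i j k l : Fin m} (h1 : i < j) (h2 : j < k)
    (h3 : k < l) (hik : blk ψ i = blk ψ k) (hjl : blk ψ j = blk ψ l) :
    blk ψ i = blk ψ j :=
  sameBlock_iff.1 (hNC i j k l h1 h2 h3 (sameBlock_iff.2 hik) (sameBlock_iff.2 hjl))

/-- If some element of `B` lies strictly inside the span of `C ≠ B`, then all of `B` does. -/
lemma nest {ψ : FP m} (hNC : IsNC ψ) {B C : Finset (Fin m)} (hB : B ∈ ψ.parts)
    (hC : C ∈ ψ.parts) (hBC : B ≠ C) (hneC : C.Nonempty) {g : Fin m} (hg : g ∈ B)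
    (h1 : C.min' hneC < g) (h2 : g < C.max' hneC) :
    ∀ x ∈ B, C.min' hneC < x ∧ x < C.max' hneC := by
  intro x hx
  have hblkB : blk ψ g = B := blk_eq_of_mem hB hg
  have hblkx : blk ψ x = B := blk_eq_of_mem hB hx
  have hblkmin : blk ψ (C.min' hneC) = C := blk_eq_of_mem hC (C.min'_mem hneC)
  have hblkmax : blk ψ (C.max' hneC) = C := blk_eq_of_mem hC (C.max'_mem hneC)
  constructor
  · by_contra hle
    push_neg at hle
    have hne : x ≠ C.min' hneC := by
      rintro rfl
      exact hBC (ψ.eq_of_mem_parts hB hC hx (C.min'_mem hneC))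
    have hlt : x < C.min' hneC := lt_of_le_of_ne hle hne
    have := cross hNC hlt h1 h2 (hblkx.trans hblkB.symm) (hblkmin.trans hblkmax.symm)
    exact hBC (by rw [← hblkx, this, hblkmin])
  · by_contra hle
    push_neg at hle
    have hne : x ≠ C.max' hneC := by
      rintro rfl
      exact hBC (ψ.eq_of_mem_parts hB hC hx (C.max'_mem hneC))
    have hlt : C.max' hneC < x := lt_of_le_of_ne hle (Ne.symm hne)
    have := cross hNC h1 h2 hlt (hblkmin.trans hblkmax.symm) (hblkB.trans hblkx.symm)
    rw [hblkmin, hblkB] at this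
    exact hBC this.symm

/-! ### embracing, parents -/

def sEmb (B A : Finset (Fin m)) : Prop :=
  ∃ (hB : B.Nonempty) (hA : A.Nonempty), B.min' hB < A.min' hA ∧ A.max' hA < B.max' hB

def wEmb (B A : Finset (Fin m)) : Prop :=
  ∃ (hB : B.Nonempty) (hA : A.Nonempty), B.min' hB ≤ A.min' hA ∧ A.max' hA ≤ B.max' hB

lemma strictlyEmbraces_iff_sEmb {B A : Finset (Fin m)} (hB : B.Nonempty) (hA : A.Nonempty) :
    StrictlyEmbraces B A ↔ sEmb B A := by
  constructor
  · rintro ⟨b₁, b₂, a₁, a₂, h₁, h₂, h₃, h₄, h₅, h₆⟩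
    rw [isMinOf_iff hB] at h₁; rw [isMaxOf_iff hB] at h₂
    rw [isMinOf_iff hA] at h₃; rw [isMaxOf_iff hA] at h₄
    subst h₁; subst h₂; subst h₃; subst h₄
    exact ⟨hB, hA, h₅, h₆⟩
  · rintro ⟨hB', hA', h₅, h₆⟩
    exact ⟨_, _, _, _, isMinOf_min' hB, isMaxOf_max' hB, isMinOf_min' hA, isMaxOf_max' hA,
      h₅, h₆⟩

lemma sEmb.wEmb {B A : Finset (Fin m)} (h : sEmb B A) : wEmb B A := by
  obtain ⟨hB, hA, h1, h2⟩ := h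
  exact ⟨hB, hA, le_of_lt h1, le_of_lt h2⟩

lemma wEmb_refl {B : Finset (Fin m)} (hB : B.Nonempty) : wEmb B B := ⟨hB, hB, le_rfl, le_rfl⟩

noncomputable def parentOf (ψ : FP m) (A : Finset (Fin m)) : Finset (Fin m) :=
  if h : (ψ.parts.filter (fun B => sEmb B A)).Nonempty then
    (Finset.exists_max_image _ (fun B => B.min) h).choose
  else ∅

lemma parent_spec {ψ : FP m} (hNC : IsNC ψ) {A : Finset (Fin m)} (hA : A ∈ ψ.parts)
    (hemb : ∃ B ∈ ψ.parts, sEmb B A) :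
    parentOf ψ A ∈ ψ.parts ∧ sEmb (parentOf ψ A) A ∧
      ∀ B ∈ ψ.parts, sEmb B A → wEmb B (parentOf ψ A) := by
  obtain ⟨B₀, hB₀, hB₀emb⟩ := hemb
  have hfil : (ψ.parts.filter (fun B => sEmb B A)).Nonempty :=
    ⟨B₀, mem_filter.2 ⟨hB₀, hB₀emb⟩⟩
  rw [parentOf, dif_pos hfil]
  obtain ⟨hPmem, hPmax⟩ := (Finset.exists_max_image _ (fun B => B.min) hfil).choose_spec
  set P := (Finset.exists_max_image (ψ.parts.filter fun B => sEmb B A) (fun B => B.min)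
    hfil).choose with hP
  rw [mem_filter] at hPmem
  obtain ⟨hPparts, hPemb⟩ := hPmem
  refine ⟨hPparts, hPemb, ?_⟩
  intro B hB hBemb
  by_cases hBP : B = P
  · subst hBP; exact wEmb_refl (parts_nonempty hB)
  obtain ⟨hneB, hneA, hB1, hB2⟩ := hBemb
  obtain ⟨hneP, _, hP1, hP2⟩ := hPemb
  have hmin : B.min ≤ P.min := hPmax B (mem_filter.2 ⟨hB, ⟨hneB, hneA, hB1, hB2⟩⟩)
  rw [← Finset.coe_min' hneB, ← Finset.coe_min' hneP] at hmin
  replace hmin : B.min' hneB ≤ P.min' hneP := by exact_mod_cast hmin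
  have hminlt : B.min' hneB < P.min' hneP := by
    rcases lt_or_eq_of_le hmin with h | h
    · exact h
    · exfalso
      apply hBP
      exact ψ.eq_of_mem_parts hB hPparts (h ▸ B.min'_mem hneB) (P.min'_mem hneP)
  -- min' P lies strictly inside the span of B
  have hin : P.min' hneP < B.max' hneB :=
    lt_trans (lt_of_lt_of_le hP1 (A.min'_le _ (A.max'_mem hneA))) hB2
  have hnest := nest hNC hPparts hB (fun h => hBP h.symm) hneB (P.min'_mem hneP) hminlt hin
  obtain ⟨hl, hr⟩ := hnest (P.max' hneP) (P.max'_mem hneP)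
  exact ⟨hneB, hneP, le_of_lt hminlt, le_of_lt hr⟩

/-! ### parity helpers -/

lemma block_parity_unique {B : Finset (Fin m)} (h : B.Nonempty) :
    ¬ (OddBlock B ∧ EvenBlock B) := by
  rintro ⟨h1, h2⟩
  obtain ⟨x, hx⟩ := h
  have := h1 x hx; have := h2 x hx; omega

lemma opposite_of_not_same {A B : Finset (Fin m)} (hA : A.Nonempty) (hB : B.Nonempty)
    (hA' : OddBlock A ∨ EvenBlock A) (hB' : OddBlock B ∨ EvenBlock B)
    (h : ¬ SameParity A B) :
    (OddBlock A ∧ EvenBlock B) ∨ (EvenBlock A ∧ OddBlock B) := by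
  rcases hA' with h1 | h1 <;> rcases hB' with h2 | h2
  · exact absurd (Or.inl ⟨h1, h2⟩) h
  · exact Or.inl ⟨h1, h2⟩
  · exact Or.inr ⟨h1, h2⟩
  · exact absurd (Or.inr ⟨h1, h2⟩) h

lemma parity_eq_of_mem {B : Finset (Fin m)} (hB : OddBlock B ∨ EvenBlock B)
    {x y : Fin m} (hx : x ∈ B) (hy : y ∈ B) : x.val % 2 = y.val % 2 := by
  rcases hB with h | h
  · rw [h x hx, h y hy]
  · rw [h x hx, h y hy]

/-! ### consequences of having exactly two outer blocks -/

lemma no_emb_of_zero (hm : 0 < m) {A B : Finset (Fin m)} (hz : (⟨0, hm⟩ : Fin m) ∈ A) :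
    ¬ sEmb B A := by
  rintro ⟨hB, hA, h1, h2'⟩
  have := A.min'_le _ hz
  have h0 : (A.min' hA).val ≤ 0 := this
  have : (B.min' hB).val < (A.min' hA).val := h1
  omega

lemma no_emb_of_last (hm : 0 < m) {A B : Finset (Fin m)}
    (hz : (⟨m-1, by omega⟩ : Fin m) ∈ A) : ¬ sEmb B A := by
  rintro ⟨hB, hA, h1, h2'⟩
  have := A.le_max' _ hz
  have h0 : m - 1 ≤ (A.max' hA).val := this
  have h1' : (A.max' hA).val < (B.max' hB).val := h2'
  have := (B.max' hB).isLt
  omega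

lemma blk_zero_outer {ψ : FP m} (hm : 0 < m) : IsOuter ψ (blk ψ ⟨0, hm⟩) := by
  refine ⟨blk_mem ψ _, ?_⟩
  rintro ⟨B, hB, hemb⟩
  rw [strictlyEmbraces_iff_sEmb (parts_nonempty hB) (parts_nonempty (blk_mem ψ _))] at hemb
  exact no_emb_of_zero hm (mem_blk ψ _) hemb

lemma blk_last_outer {ψ : FP m} (hm : 0 < m) : IsOuter ψ (blk ψ ⟨m-1, by omega⟩) := by
  refine ⟨blk_mem ψ _, ?_⟩
  rintro ⟨B, hB, hemb⟩
  rw [strictlyEmbraces_iff_sEmb (parts_nonempty hB) (parts_nonempty (blk_mem ψ _))] at hemb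
  exact no_emb_of_last hm (mem_blk ψ _) hemb

lemma blk_zero_ne_last {ψ : FP m} (hpar : ParityPreserving ψ) (hm : 0 < m)
    (heven : m % 2 = 0) : blk ψ ⟨0, hm⟩ ≠ blk ψ ⟨m-1, by omega⟩ := by
  intro h
  have h0 : (⟨0, hm⟩ : Fin m) ∈ blk ψ ⟨0, hm⟩ := mem_blk ψ _
  have h1 : (⟨m-1, by omega⟩ : Fin m) ∈ blk ψ ⟨0, hm⟩ := h ▸ mem_blk ψ _
  have := parity_eq_of_mem (hpar _ (blk_mem ψ _)) h0 h1
  simp only [Fin.val_mk] at this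
  omega

lemma outer_classify {ψ : FP m} (hpar : ParityPreserving ψ)
    (h2 : ExactlyTwoOuterBlocks ψ) (hm : 0 < m) (heven : m % 2 = 0)
    {A : Finset (Fin m)} (hA : A ∈ ψ.parts) (hout : IsOuter ψ A) :
    A = blk ψ ⟨0, hm⟩ ∨ A = blk ψ ⟨m-1, by omega⟩ := by
  obtain ⟨M, hM, N, hN, hMN, hMo, hNo, hcl⟩ := h2
  have hz := hcl _ (blk_mem ψ ⟨0, hm⟩) (blk_zero_outer hm)
  have hl := hcl _ (blk_mem ψ ⟨m-1, by omega⟩) (blk_last_outer hm)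
  have hne := blk_zero_ne_last hpar hm heven
  have hA' := hcl _ hA hout
  rcases hz with hz | hz <;> rcases hl with hl | hl <;> rcases hA' with h | h <;>
    first
      | (exact absurd (hz.symm.trans hl) hMN)
      | (exact absurd (hz.trans hl.symm) hne)
      | (left; rw [h, ← hz])
      | (right; rw [h, ← hl])

lemma nonouter_parent {ψ : FP m} (hpar : ParityPreserving ψ)
    (h2 : ExactlyTwoOuterBlocks ψ) (hm : 0 < m) (heven : m % 2 = 0)
    {A : Finset (Fin m)} (hA : A ∈ ψ.parts)
    (h0 : A ≠ blk ψ ⟨0, hm⟩) (hl : A ≠ blk ψ ⟨m-1, by omega⟩) :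
    ∃ B ∈ ψ.parts, sEmb B A := by
  by_contra hno
  push_neg at hno
  have hout : IsOuter ψ A := by
    refine ⟨hA, ?_⟩
    rintro ⟨B, hB, hemb⟩
    rw [strictlyEmbraces_iff_sEmb (parts_nonempty hB) (parts_nonempty hA)] at hemb
    exact hno B hB hemb
  rcases outer_classify hpar h2 hm heven hA hout with h | h
  · exact h0 h
  · exact hl h

lemma span_side {ψ : FP m} (hNC : IsNC ψ) (hpar : ParityPreserving ψ)
    (h2 : ExactlyTwoOuterBlocks ψ) (hm : 0 < m) (heven : m % 2 = 0) :
    ∀ (k : ℕ) (A : Finset (Fin m)), A ∈ ψ.parts → ∀ (hne : A.Nonempty),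
    m - ((A.max' hne).val - (A.min' hne).val) ≤ k →
    (∀ x ∈ A, x ≤ (blk ψ ⟨0, hm⟩).max' (parts_nonempty (blk_mem ψ _))) ∨
    (∀ x ∈ A, (blk ψ ⟨m-1, by omega⟩).min' (parts_nonempty (blk_mem ψ _)) ≤ x) := by
  intro k
  induction k with
  | zero =>
    intro A hA hne hk
    exfalso
    have h1 := (A.max' hne).isLt
    omega
  | succ k ih =>
    intro A hA hne hk
    by_cases h0 : A = blk ψ ⟨0, hm⟩
    · left; intro x hx
      exact Finset.le_max' _ x (h0 ▸ hx)
    by_cases hl : A = blk ψ ⟨m-1, by omega⟩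
    · right; intro x hx
      exact Finset.min'_le _ x (hl ▸ hx)
    obtain ⟨hPmem, hPemb, -⟩ := parent_spec hNC hA
      (nonouter_parent hpar h2 hm heven hA h0 hl)
    obtain ⟨hneP, hneA, hp1, hp2⟩ := hPemb
    have hlt1 : ((parentOf ψ A).min' hneP).val < (A.min' hne).val := hp1
    have hlt2 : (A.max' hne).val < ((parentOf ψ A).max' hneP).val := hp2
    have hbound : ((parentOf ψ A).max' hneP).val < m := Fin.isLt _
    have hminmax : (A.min' hne).val ≤ (A.max' hne).val :=
      A.min'_le _ (A.max'_mem hne)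
    have hk' : m - (((parentOf ψ A).max' hneP).val - ((parentOf ψ A).min' hneP).val) ≤ k := by
      omega
    rcases ih (parentOf ψ A) hPmem hneP hk' with h | h
    · left
      intro x hx
      calc x ≤ A.max' hne := A.le_max' x hx
        _ ≤ (parentOf ψ A).max' hneP := le_of_lt hp2
        _ ≤ _ := h _ ((parentOf ψ A).max'_mem hneP)
    · right
      intro x hx
      calc (blk ψ ⟨m-1, by omega⟩).min' _ ≤ (parentOf ψ A).min' hneP :=
          h _ ((parentOf ψ A).min'_mem hneP)
        _ ≤ A.min' hne := le_of_lt hp1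
        _ ≤ x := A.min'_le x hx

lemma side_of_elem {ψ : FP m} (hNC : IsNC ψ) (hpar : ParityPreserving ψ)
    (h2 : ExactlyTwoOuterBlocks ψ) (hm : 0 < m) (heven : m % 2 = 0) (x : Fin m) :
    x ≤ (blk ψ ⟨0, hm⟩).max' (parts_nonempty (blk_mem ψ _)) ∨
    (blk ψ ⟨m-1, by omega⟩).min' (parts_nonempty (blk_mem ψ _)) ≤ x := by
  rcases span_side hNC hpar h2 hm heven m (blk ψ x) (blk_mem ψ x)
    (parts_nonempty (blk_mem ψ x)) (by omega) with h | h
  · left; exact h x (mem_blk ψ x)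
  · right; exact h x (mem_blk ψ x)

lemma maxM_succ_eq_minN {ψ : FP m} (hNC : IsNC ψ) (hpar : ParityPreserving ψ)
    (h2 : ExactlyTwoOuterBlocks ψ) (hm : 0 < m) (heven : m % 2 = 0) :
    ((blk ψ ⟨0, hm⟩).max' (parts_nonempty (blk_mem ψ _))).val + 1 =
    ((blk ψ ⟨m-1, by omega⟩).min' (parts_nonempty (blk_mem ψ _))).val := by
  set M := blk ψ (⟨0, hm⟩ : Fin m) with hM
  set N := blk ψ (⟨m-1, by omega⟩ : Fin m) with hN
  have hMne : M.Nonempty := parts_nonempty (blk_mem ψ _)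
  have hNne : N.Nonempty := parts_nonempty (blk_mem ψ _)
  have hMNne : M ≠ N := blk_zero_ne_last hpar hm heven
  have hlt : (M.max' hMne).val < (N.min' hNne).val := by
    by_contra hge
    push_neg at hge
    have hge' : (N.min' hNne).val ≤ (M.max' hMne).val := hge
    have hminM : (M.min' hMne).val = 0 := by
      have := M.min'_le _ (mem_blk ψ ⟨0, hm⟩)
      have h0 : (M.min' hMne).val ≤ 0 := this
      omega
    have hmaxN : (N.max' hNne).val = m - 1 := by
      have := N.le_max' _ (mem_blk ψ ⟨m-1, by omega⟩)
      have h0 : m - 1 ≤ (N.max' hNne).val := this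
      have := (N.max' hNne).isLt
      omega
    by_cases heq : N.min' hNne = M.max' hMne
    · exact hMNne (ψ.eq_of_mem_parts (blk_mem ψ _) (blk_mem ψ _)
        (heq ▸ N.min'_mem hNne) (M.max'_mem hMne)).symm
    have hlt' : (N.min' hNne).val < (M.max' hMne).val := by
      rcases lt_or_eq_of_le hge' with h | h
      · exact h
      · exact absurd (Fin.ext h) heq
    have hgt0 : (M.min' hMne).val < (N.min' hNne).val := by
      by_contra hle
      push_neg at hle
      have heq2 : N.min' hNne = M.min' hMne := Fin.ext (by omega)
      exact hMNne (ψ.eq_of_mem_parts (blk_mem ψ _) (blk_mem ψ _)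
        (heq2 ▸ N.min'_mem hNne) (M.min'_mem hMne)).symm
    have hnest := nest hNC (blk_mem ψ _ : N ∈ ψ.parts) (blk_mem ψ _ : M ∈ ψ.parts)
      hMNne.symm hMne (N.min'_mem hNne) (by exact hgt0) (by exact hlt')
    obtain ⟨-, hr⟩ := hnest (N.max' hNne) (N.max'_mem hNne)
    have : (N.max' hNne).val < (M.max' hMne).val := hr
    have := (M.max' hMne).isLt
    omega
  have hmid : ¬ ((M.max' hMne).val + 1 < (N.min' hNne).val) := by
    intro hbad
    have hx : (M.max' hMne).val + 1 < m := by
      have := (N.min' hNne).isLt; omega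
    rcases side_of_elem hNC hpar h2 hm heven ⟨(M.max' hMne).val + 1, hx⟩ with h | h
    · have : (M.max' hMne).val + 1 ≤ (M.max' hMne).val := h
      omega
    · have : (N.min' hNne).val ≤ (M.max' hMne).val + 1 := h
      omega
  show (M.max' hMne).val + 1 = (N.min' hNne).val
  omega

/-! ### merging a block into its parent -/

def mkFP (parts : Finset (Finset (Fin m)))
    (hdisj : ∀ B ∈ parts, ∀ C ∈ parts, B ≠ C → Disjoint B C)
    (hcov : ∀ x : Fin m, ∃ B ∈ parts, x ∈ B)
    (hbot : ∅ ∉ parts) : FP m where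
  parts := parts
  supIndep := Finset.supIndep_iff_pairwiseDisjoint.2
    (fun B hB C hC hne => hdisj B hB C hC hne)
  sup_parts := by
    apply Finset.ext
    intro x
    simp only [Finset.mem_sup, id, mem_univ, iff_true]
    exact hcov x
  bot_notMem := hbot

lemma parts_pairwise_disjoint {ψ : FP m} {B C : Finset (Fin m)} (hB : B ∈ ψ.parts)
    (hC : C ∈ ψ.parts) (hne : B ≠ C) : Disjoint B C := by
  rw [Finset.disjoint_left]
  intro a haB haC
  exact hne (ψ.eq_of_mem_parts hB hC haB haC)

lemma sEmb_ne {B A : Finset (Fin m)} (h : sEmb B A) : B ≠ A := by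
  rintro rfl
  obtain ⟨hB, hA, h1, -⟩ := h
  have : B.min' hB = B.min' hA := rfl
  rw [this] at h1
  exact lt_irrefl _ h1

def MergePair (ψ : FP m) (A P : Finset (Fin m)) : Prop :=
  A ∈ ψ.parts ∧ P ∈ ψ.parts ∧ sEmb P A ∧
  (∀ B ∈ ψ.parts, sEmb B A → wEmb B P) ∧ SameParity A P

def MergeCond (ψ : FP m) : Prop := ∃ A P, MergePair ψ A P

noncomputable def mergeP (ψ : FP m) (A P : Finset (Fin m)) (hA : A ∈ ψ.parts)
    (hP : P ∈ ψ.parts) (hne : P ≠ A) : FP m :=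
  mkFP (insert (A ∪ P) ((ψ.parts.erase A).erase P))
    (by
      intro B hB C hC hBC
      rw [mem_insert, mem_erase, mem_erase] at hB hC
      rcases hB with rfl | ⟨hBP, hBA, hB⟩
      · rcases hC with rfl | ⟨hCP, hCA, hC⟩
        · exact absurd rfl hBC
        · rw [Finset.disjoint_union_left]
          exact ⟨parts_pairwise_disjoint hA hC (Ne.symm hCA),
            parts_pairwise_disjoint hP hC (Ne.symm hCP)⟩
      · rcases hC with rfl | ⟨hCP, hCA, hC⟩
        · rw [Finset.disjoint_union_right]
          exact ⟨parts_pairwise_disjoint hB hA hBA,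
            parts_pairwise_disjoint hB hP hBP⟩
        · exact parts_pairwise_disjoint hB hC hBC)
    (by
      intro x
      by_cases h : blk ψ x = A
      · exact ⟨A ∪ P, mem_insert_self _ _, Finset.mem_union_left _ (h ▸ mem_blk ψ x)⟩
      by_cases h' : blk ψ x = P
      · exact ⟨A ∪ P, mem_insert_self _ _, Finset.mem_union_right _ (h' ▸ mem_blk ψ x)⟩
      · exact ⟨blk ψ x, mem_insert_of_mem (mem_erase.2 ⟨h', mem_erase.2 ⟨h, blk_mem ψ x⟩⟩),
          mem_blk ψ x⟩)
    (by
      rw [mem_insert]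
      rintro (h | h)
      · obtain ⟨a, ha⟩ := parts_nonempty hA
        have : a ∈ (∅ : Finset (Fin m)) := h ▸ Finset.mem_union_left _ ha
        simp at this
      · rw [mem_erase, mem_erase] at h
        exact ψ.bot_notMem h.2.2)

lemma mergeP_parts {ψ : FP m} {A P : Finset (Fin m)} (hA : A ∈ ψ.parts)
    (hP : P ∈ ψ.parts) (hne : P ≠ A) {C : Finset (Fin m)} :
    C ∈ (mergeP ψ A P hA hP hne).parts ↔
      C = A ∪ P ∨ (C ∈ ψ.parts ∧ C ≠ A ∧ C ≠ P) := by
  show C ∈ insert (A ∪ P) ((ψ.parts.erase A).erase P) ↔ _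
  rw [mem_insert, mem_erase, mem_erase]
  tauto

lemma mergeP_card {ψ : FP m} {A P : Finset (Fin m)} (hA : A ∈ ψ.parts)
    (hP : P ∈ ψ.parts) (hne : P ≠ A) :
    (mergeP ψ A P hA hP hne).parts.card < ψ.parts.card := by
  show (insert (A ∪ P) ((ψ.parts.erase A).erase P)).card < ψ.parts.card
  have h1 : ((ψ.parts.erase A).erase P).card = ψ.parts.card - 2 := by
    rw [Finset.card_erase_of_mem (mem_erase.2 ⟨hne, hP⟩), Finset.card_erase_of_mem hA]
    omega
  have h2 : 2 ≤ ψ.parts.card := by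
    have : {A, P} ⊆ ψ.parts := by
      intro x hx
      rw [mem_insert, mem_singleton] at hx
      rcases hx with rfl | rfl
      · exact hA
      · exact hP
    have := Finset.card_le_card this
    rwa [Finset.card_insert_of_notMem (by simpa using (Ne.symm hne)), Finset.card_singleton]
      at this
  have := Finset.card_insert_le (A ∪ P) ((ψ.parts.erase A).erase P)
  omega

/-! ### merge invariants (easy ones) -/

lemma union_min'_eq {A P : Finset (Fin m)} (hPne : P.Nonempty) (hAne : A.Nonempty)
    (h1 : P.min' hPne < A.min' hAne) (hu : (A ∪ P).Nonempty) :
    (A ∪ P).min' hu = P.min' hPne := by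
  apply le_antisymm
  · exact Finset.min'_le _ _ (Finset.mem_union_right _ (P.min'_mem hPne))
  · apply Finset.le_min'
    intro y hy
    rcases Finset.mem_union.1 hy with h | h
    · exact le_trans (le_of_lt h1) (A.min'_le y h)
    · exact P.min'_le y h

lemma union_max'_eq {A P : Finset (Fin m)} (hPne : P.Nonempty) (hAne : A.Nonempty)
    (h2 : A.max' hAne < P.max' hPne) (hu : (A ∪ P).Nonempty) :
    (A ∪ P).max' hu = P.max' hPne := by
  apply le_antisymm
  · apply Finset.max'_le
    intro y hy
    rcases Finset.mem_union.1 hy with h | h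
    · exact le_trans (A.le_max' y h) (le_of_lt h2)
    · exact P.le_max' y h
  · exact Finset.le_max' _ _ (Finset.mem_union_right _ (P.max'_mem hPne))

lemma merge_parity {ψ : FP m} {A P : Finset (Fin m)} (hA : A ∈ ψ.parts)
    (hP : P ∈ ψ.parts) (hne : P ≠ A) (hpar : ParityPreserving ψ)
    (hsp : SameParity A P) : ParityPreserving (mergeP ψ A P hA hP hne) := by
  intro C hC
  rw [mergeP_parts] at hC
  rcases hC with rfl | ⟨hC, -, -⟩
  · rcases hsp with ⟨h1, h2⟩ | ⟨h1, h2⟩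
    · left; intro x hx
      rcases Finset.mem_union.1 hx with h | h
      · exact h1 x h
      · exact h2 x h
    · right; intro x hx
      rcases Finset.mem_union.1 hx with h | h
      · exact h1 x h
      · exact h2 x h
  · exact hpar C hC

lemma merge_refines {θ ψ : FP m} {A P : Finset (Fin m)} (hA : A ∈ ψ.parts)
    (hP : P ∈ ψ.parts) (hne : P ≠ A)
    (href : ∀ B ∈ θ.parts, ∃ C ∈ ψ.parts, B ⊆ C) :
    ∀ B ∈ θ.parts, ∃ C ∈ (mergeP ψ A P hA hP hne).parts, B ⊆ C := by
  intro B hB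
  obtain ⟨C, hC, hsub⟩ := href B hB
  by_cases h1 : C = A
  · exact ⟨A ∪ P, (mergeP_parts hA hP hne).2 (Or.inl rfl),
      h1 ▸ hsub |>.trans Finset.subset_union_left⟩
  by_cases h2 : C = P
  · exact ⟨A ∪ P, (mergeP_parts hA hP hne).2 (Or.inl rfl),
      h2 ▸ hsub |>.trans Finset.subset_union_right⟩
  · exact ⟨C, (mergeP_parts hA hP hne).2 (Or.inr ⟨hC, h1, h2⟩), hsub⟩

lemma merge_minmax {θ ψ : FP m} {A P : Finset (Fin m)} (hA : A ∈ ψ.parts)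
    (hP : P ∈ ψ.parts) (hne : P ≠ A) (hsE : sEmb P A)
    (hmm : ∀ C ∈ ψ.parts, ∃ B ∈ θ.parts, ∃ x y, IsMinOf x C ∧ IsMaxOf y C ∧ x ∈ B ∧ y ∈ B) :
    ∀ C ∈ (mergeP ψ A P hA hP hne).parts,
      ∃ B ∈ θ.parts, ∃ x y, IsMinOf x C ∧ IsMaxOf y C ∧ x ∈ B ∧ y ∈ B := by
  intro C hC
  rw [mergeP_parts] at hC
  rcases hC with rfl | ⟨hC, -, -⟩
  · obtain ⟨B, hB, x, y, hx, hy, hxB, hyB⟩ := hmm P hP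
    obtain ⟨hPne, hAne, h1, h2⟩ := hsE
    have hu : (A ∪ P).Nonempty := hPne.mono Finset.subset_union_right
    refine ⟨B, hB, x, y, ?_, ?_, hxB, hyB⟩
    · rw [isMinOf_iff hu, union_min'_eq hPne hAne h1 hu, ← isMinOf_iff hPne]
      exact hx
    · rw [isMaxOf_iff hu, union_max'_eq hPne hAne h2 hu, ← isMaxOf_iff hPne]
      exact hy
  · exact hmm C hC

lemma merge_twoOuter {ψ : FP m} {A P : Finset (Fin m)} (hA : A ∈ ψ.parts)
    (hP : P ∈ ψ.parts) (hne : P ≠ A) (hsE : sEmb P A)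
    (hpp : ∀ B ∈ ψ.parts, sEmb B A → wEmb B P) (hsp : SameParity A P)
    (hNC : IsNC ψ) (hpar : ParityPreserving ψ) (h2 : ExactlyTwoOuterBlocks ψ)
    (hm : 0 < m) (heven : m % 2 = 0) :
    ExactlyTwoOuterBlocks (mergeP ψ A P hA hP hne) := by
  set ψ' := mergeP ψ A P hA hP hne with hψ'
  have hpar' : ParityPreserving ψ' := merge_parity hA hP hne hpar hsp
  obtain ⟨hPne, hAne, hs1, hs2⟩ := hsE
  have hu : (A ∪ P).Nonempty := hPne.mono Finset.subset_union_right
  refine ⟨blk ψ' ⟨0, hm⟩, blk_mem _ _, blk ψ' ⟨m-1, by omega⟩, blk_mem _ _,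
    blk_zero_ne_last hpar' hm heven, blk_zero_outer hm, blk_last_outer hm, ?_⟩
  intro C hC hCout
  -- convert outerness to sEmb form
  have hout : ∀ B ∈ ψ'.parts, ¬ sEmb B C := by
    intro B hB hemb
    exact hCout.2 ⟨B, hB, (strictlyEmbraces_iff_sEmb (parts_nonempty hB)
      (parts_nonempty hC)).2 hemb⟩
  rw [hψ', mergeP_parts] at hC
  rcases hC with rfl | ⟨hC, hCA, hCP⟩
  · -- C = A ∪ P ; show P is outer in ψ
    have hPouter : IsOuter ψ P := by
      refine ⟨hP, ?_⟩
      rintro ⟨B, hB, hemb⟩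
      rw [strictlyEmbraces_iff_sEmb (parts_nonempty hB) hPne] at hemb
      obtain ⟨hBne, hPne', hb1, hb2⟩ := hemb
      have hBP : B ≠ P := sEmb_ne ⟨hBne, hPne', hb1, hb2⟩
      have hBA : B ≠ A := by
        rintro rfl
        have c1 : (B.min' hBne).val < (P.min' hPne).val := hb1
        have c2 : (P.min' hPne).val < (B.min' hAne).val := hs1
        have : B.min' hBne = B.min' hAne := rfl
        rw [this] at c1
        omega
      apply hout B ((mergeP_parts hA hP hne).2 (Or.inr ⟨hB, hBA, hBP⟩))
      refine ⟨hBne, hu, ?_, ?_⟩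
      · rw [union_min'_eq hPne hAne hs1 hu]; exact hb1
      · rw [union_max'_eq hPne hAne hs2 hu]; exact hb2
    rcases outer_classify hpar h2 hm heven hP hPouter with h | h
    · left
      have : (⟨0, hm⟩ : Fin m) ∈ A ∪ P :=
        Finset.mem_union_right _ (h ▸ mem_blk ψ ⟨0, hm⟩)
      exact (blk_eq_of_mem ((mergeP_parts hA hP hne).2 (Or.inl rfl)) this).symm
    · right
      have : (⟨m-1, by omega⟩ : Fin m) ∈ A ∪ P :=
        Finset.mem_union_right _ (h ▸ mem_blk ψ _)
      exact (blk_eq_of_mem ((mergeP_parts hA hP hne).2 (Or.inl rfl)) this).symm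
  · -- C an old block
    have hCne : C.Nonempty := parts_nonempty hC
    have hCouter : IsOuter ψ C := by
      refine ⟨hC, ?_⟩
      rintro ⟨B, hB, hemb⟩
      rw [strictlyEmbraces_iff_sEmb (parts_nonempty hB) hCne] at hemb
      obtain ⟨hBne, hCne', hb1, hb2⟩ := hemb
      -- reduce B = A to B = P
      have key : ∀ (hPC1 : (P.min' hPne).val < (C.min' hCne').val)
          (hPC2 : (C.max' hCne').val < (P.max' hPne).val), False := by
        intro hPC1 hPC2
        apply hout (A ∪ P) ((mergeP_parts hA hP hne).2 (Or.inl rfl))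
        refine ⟨hu, hCne', ?_, ?_⟩
        · rw [union_min'_eq hPne hAne hs1 hu]; exact hPC1
        · rw [union_max'_eq hPne hAne hs2 hu]; exact hPC2
      by_cases hBA : B = A
      · subst hBA
        have c1 : (B.min' hBne).val < (C.min' hCne').val := hb1
        have c2 : (C.max' hCne').val < (B.max' hBne).val := hb2
        have e1 : B.min' hAne = B.min' hBne := rfl
        have e2 : B.max' hAne = B.max' hBne := rfl
        have d1 : (P.min' hPne).val < (B.min' hBne).val := by rw [← e1]; exact hs1
        have d2 : (B.max' hBne).val < (P.max' hPne).val := by rw [← e2]; exact hs2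
        exact key (by omega) (by omega)
      by_cases hBP : B = P
      · subst hBP
        have e1 : B.min' hPne = B.min' hBne := rfl
        have e2 : B.max' hPne = B.max' hBne := rfl
        exact key (by rw [e1]; exact hb1) (by rw [e2]; exact hb2)
      · exact hout B ((mergeP_parts hA hP hne).2 (Or.inr ⟨hB, hBA, hBP⟩))
          ⟨hBne, hCne', hb1, hb2⟩
    rcases outer_classify hpar h2 hm heven hC hCouter with h | h
    · left
      exact (blk_eq_of_mem ((mergeP_parts hA hP hne).2 (Or.inr ⟨hC, hCA, hCP⟩))
        (h ▸ mem_blk ψ _)).symm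
    · right
      exact (blk_eq_of_mem ((mergeP_parts hA hP hne).2 (Or.inr ⟨hC, hCA, hCP⟩))
        (h ▸ mem_blk ψ _)).symm

/-! ### merging preserves non-crossing -/

section MergeNC

variable {ψ : FP m} {A P B : Finset (Fin m)}

lemma merge_pattern1 (hNC : IsNC ψ) (hA : A ∈ ψ.parts) (hP : P ∈ ψ.parts)
    (hPne : P.Nonempty) (hAne : A.Nonempty)
    (hs1 : P.min' hPne < A.min' hAne) (hs2 : A.max' hAne < P.max' hPne)
    (hpp : ∀ B ∈ ψ.parts, sEmb B A → wEmb B P)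
    (hB : B ∈ ψ.parts) (hBA : B ≠ A) (hBP : B ≠ P)
    {x y b₁ b₂ : Fin m} (hx : x ∈ A ∪ P) (hy : y ∈ A ∪ P)
    (hb₁ : b₁ ∈ B) (hb₂ : b₂ ∈ B)
    (h1 : x < b₁) (h2 : b₁ < y) (h3 : y < b₂) : False := by
  have hBne : B.Nonempty := parts_nonempty hB
  have hPA : P ≠ A := by
    rintro rfl
    have : P.min' hPne = P.min' hAne := rfl
    rw [this] at hs1; exact lt_irrefl _ hs1
  have hxP : P.min' hPne ≤ x := by
    rcases Finset.mem_union.1 hx with h | h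
    · exact le_trans (le_of_lt hs1) (A.min'_le x h)
    · exact P.min'_le x h
  have hyP : y ≤ P.max' hPne := by
    rcases Finset.mem_union.1 hy with h | h
    · exact le_trans (A.le_max' y h) (le_of_lt hs2)
    · exact P.le_max' y h
  have hin1 : P.min' hPne < b₁ := lt_of_le_of_lt hxP h1
  have hin2 : b₁ < P.max' hPne := lt_of_lt_of_le h2 hyP
  have hnestP := nest hNC hB hP hBP hPne hb₁ hin1 hin2
  rcases Finset.mem_union.1 hx with hxA | hxPP <;> rcases Finset.mem_union.1 hy with hyA | hyPP
  · -- x ∈ A, y ∈ A : direct crossing with A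
    have := cross hNC h1 h2 h3 (by rw [blk_eq_of_mem hA hxA, blk_eq_of_mem hA hyA])
      (by rw [blk_eq_of_mem hB hb₁, blk_eq_of_mem hB hb₂])
    rw [blk_eq_of_mem hA hxA, blk_eq_of_mem hB hb₁] at this
    exact hBA this.symm
  · -- x ∈ A, y ∈ P : crossing with pair (min' P, y)
    have := cross hNC hin1 h2 h3
      (by rw [blk_eq_of_mem hP (P.min'_mem hPne), blk_eq_of_mem hP hyPP])
      (by rw [blk_eq_of_mem hB hb₁, blk_eq_of_mem hB hb₂])
    rw [blk_eq_of_mem hP (P.min'_mem hPne), blk_eq_of_mem hB hb₁] at this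
    exact hBP this.symm
  · -- x ∈ P, y ∈ A
    rcases lt_trichotomy b₁ (A.min' hAne) with hlt | heq | hgt
    · rcases lt_trichotomy b₂ (A.max' hAne) with hlt2 | heq2 | hgt2
      · have hge : A.min' hAne < b₂ := lt_of_le_of_lt (A.min'_le y hyA) h3
        have hnestA := nest hNC hB hA hBA hAne hb₂ hge hlt2
        obtain ⟨hc, -⟩ := hnestA b₁ hb₁
        exact absurd hlt (not_lt_of_gt hc)
      · exact hBA (ψ.eq_of_mem_parts hB hA (heq2 ▸ hb₂) (A.max'_mem hAne))
      · have hsEB : sEmb B A :=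
          ⟨hBne, hAne, lt_of_le_of_lt (B.min'_le b₁ hb₁) hlt,
            lt_of_lt_of_le hgt2 (B.le_max' b₂ hb₂)⟩
        obtain ⟨hBne', hPne', hw1, hw2⟩ := hpp B hB hsEB
        obtain ⟨hc, -⟩ := hnestP (B.min' hBne) (B.min'_mem hBne)
        have c1 : (B.min' hBne).val ≤ (P.min' hPne).val := by
          have e1 : B.min' hBne' = B.min' hBne := rfl
          have e2 : P.min' hPne' = P.min' hPne := rfl
          rw [← e1, ← e2]; exact hw1
        have c2 : (P.min' hPne).val < (B.min' hBne).val := hc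
        omega
    · exact hBA (ψ.eq_of_mem_parts hB hA (heq ▸ hb₁) (A.min'_mem hAne))
    · have hlt2 : b₁ < A.max' hAne := lt_of_lt_of_le h2 (A.le_max' y hyA)
      have hnestA := nest hNC hB hA hBA hAne hb₁ hgt hlt2
      obtain ⟨-, hb₂2⟩ := hnestA b₂ hb₂
      have := cross hNC h2 h3 hb₂2
        (by rw [blk_eq_of_mem hB hb₁, blk_eq_of_mem hB hb₂])
        (by rw [blk_eq_of_mem hA hyA, blk_eq_of_mem hA (A.max'_mem hAne)])
      rw [blk_eq_of_mem hB hb₁, blk_eq_of_mem hA hyA] at this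
      exact hBA this
  · -- x ∈ P, y ∈ P : direct crossing with P
    have := cross hNC h1 h2 h3 (by rw [blk_eq_of_mem hP hxPP, blk_eq_of_mem hP hyPP])
      (by rw [blk_eq_of_mem hB hb₁, blk_eq_of_mem hB hb₂])
    rw [blk_eq_of_mem hP hxPP, blk_eq_of_mem hB hb₁] at this
    exact hBP this.symm

end MergeNC

section MergeNC2

variable {ψ : FP m} {A P B : Finset (Fin m)}

lemma merge_pattern2 (hNC : IsNC ψ) (hA : A ∈ ψ.parts) (hP : P ∈ ψ.parts)
    (hPne : P.Nonempty) (hAne : A.Nonempty)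
    (hs1 : P.min' hPne < A.min' hAne) (hs2 : A.max' hAne < P.max' hPne)
    (hpp : ∀ B ∈ ψ.parts, sEmb B A → wEmb B P)
    (hB : B ∈ ψ.parts) (hBA : B ≠ A) (hBP : B ≠ P)
    {x y b₁ b₂ : Fin m} (hx : x ∈ A ∪ P) (hy : y ∈ A ∪ P)
    (hb₁ : b₁ ∈ B) (hb₂ : b₂ ∈ B)
    (h1 : b₁ < x) (h2 : x < b₂) (h3 : b₂ < y) : False := by
  have hBne : B.Nonempty := parts_nonempty hB
  have hPA : P ≠ A := by
    rintro rfl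
    have : P.min' hPne = P.min' hAne := rfl
    rw [this] at hs1; exact lt_irrefl _ hs1
  have hxP : P.min' hPne ≤ x := by
    rcases Finset.mem_union.1 hx with h | h
    · exact le_trans (le_of_lt hs1) (A.min'_le x h)
    · exact P.min'_le x h
  have hyP : y ≤ P.max' hPne := by
    rcases Finset.mem_union.1 hy with h | h
    · exact le_trans (A.le_max' y h) (le_of_lt hs2)
    · exact P.le_max' y h
  have hin1 : P.min' hPne < b₂ := lt_of_le_of_lt hxP h2
  have hin2 : b₂ < P.max' hPne := lt_of_lt_of_le h3 hyP
  have hnestP := nest hNC hB hP hBP hPne hb₂ hin1 hin2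
  rcases Finset.mem_union.1 hx with hxA | hxPP <;> rcases Finset.mem_union.1 hy with hyA | hyPP
  · -- x ∈ A, y ∈ A
    have := cross hNC h1 h2 h3 (by rw [blk_eq_of_mem hB hb₁, blk_eq_of_mem hB hb₂])
      (by rw [blk_eq_of_mem hA hxA, blk_eq_of_mem hA hyA])
    rw [blk_eq_of_mem hB hb₁, blk_eq_of_mem hA hxA] at this
    exact hBA this
  · -- x ∈ A, y ∈ P
    rcases lt_trichotomy b₂ (A.max' hAne) with hlt | heq | hgt
    · have hminA : A.min' hAne < b₂ := lt_of_le_of_lt (A.min'_le x hxA) h2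
      have hnestA := nest hNC hB hA hBA hAne hb₂ hminA hlt
      obtain ⟨hbb, -⟩ := hnestA b₁ hb₁
      have := cross hNC h1 h2 hlt
        (by rw [blk_eq_of_mem hB hb₁, blk_eq_of_mem hB hb₂])
        (by rw [blk_eq_of_mem hA hxA, blk_eq_of_mem hA (A.max'_mem hAne)])
      rw [blk_eq_of_mem hB hb₁, blk_eq_of_mem hA hxA] at this
      exact hBA this
    · exact hBA (ψ.eq_of_mem_parts hB hA (heq ▸ hb₂) (A.max'_mem hAne))
    · rcases lt_trichotomy b₁ (A.min' hAne) with hlt1 | heq1 | hgt1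
      · have hsEB : sEmb B A :=
          ⟨hBne, hAne, lt_of_le_of_lt (B.min'_le b₁ hb₁) hlt1,
            lt_of_lt_of_le hgt (B.le_max' b₂ hb₂)⟩
        obtain ⟨hBne', hPne', hw1, hw2⟩ := hpp B hB hsEB
        obtain ⟨hc, -⟩ := hnestP (B.min' hBne) (B.min'_mem hBne)
        have c1 : (B.min' hBne).val ≤ (P.min' hPne).val := by
          have e1 : B.min' hBne' = B.min' hBne := rfl
          have e2 : P.min' hPne' = P.min' hPne := rfl
          rw [← e1, ← e2]; exact hw1
        have c2 : (P.min' hPne).val < (B.min' hBne).val := hc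
        omega
      · exact hBA (ψ.eq_of_mem_parts hB hA (heq1 ▸ hb₁) (A.min'_mem hAne))
      · have hlt2 : b₁ < A.max' hAne := lt_of_lt_of_le h1 (A.le_max' x hxA)
        have hnestA := nest hNC hB hA hBA hAne hb₁ hgt1 hlt2
        obtain ⟨-, hc⟩ := hnestA b₂ hb₂
        exact absurd hgt (not_lt_of_gt hc)
  · -- x ∈ P, y ∈ A
    rcases lt_trichotomy b₂ (A.min' hAne) with hlt | heq | hgt
    · obtain ⟨-, hmaxB⟩ := hnestP b₂ hb₂
      have := cross hNC h1 h2 hmaxB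
        (by rw [blk_eq_of_mem hB hb₁, blk_eq_of_mem hB hb₂])
        (by rw [blk_eq_of_mem hP hxPP, blk_eq_of_mem hP (P.max'_mem hPne)])
      rw [blk_eq_of_mem hB hb₁, blk_eq_of_mem hP hxPP] at this
      exact hBP this
    · exact hBA (ψ.eq_of_mem_parts hB hA (heq ▸ hb₂) (A.min'_mem hAne))
    · have hlt2 : b₂ < A.max' hAne := lt_of_lt_of_le h3 (A.le_max' y hyA)
      have hnestA := nest hNC hB hA hBA hAne hb₂ hgt hlt2
      obtain ⟨hbb1, -⟩ := hnestA b₁ hb₁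
      have hxin1 : A.min' hAne < x := lt_trans hbb1 h1
      have hxin2 : x < A.max' hAne := lt_trans h2 hlt2
      have hnestPA := nest hNC hP hA hPA hAne hxPP hxin1 hxin2
      obtain ⟨hc, -⟩ := hnestPA (P.min' hPne) (P.min'_mem hPne)
      exact absurd hs1 (not_lt_of_gt hc)
  · -- x ∈ P, y ∈ P
    have := cross hNC h1 h2 h3 (by rw [blk_eq_of_mem hB hb₁, blk_eq_of_mem hB hb₂])
      (by rw [blk_eq_of_mem hP hxPP, blk_eq_of_mem hP hyPP])
    rw [blk_eq_of_mem hB hb₁, blk_eq_of_mem hP hxPP] at this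
    exact hBP this

lemma merge_NC (hNC : IsNC ψ) (hA : A ∈ ψ.parts) (hP : P ∈ ψ.parts) (hne : P ≠ A)
    (hsE : sEmb P A) (hpp : ∀ B ∈ ψ.parts, sEmb B A → wEmb B P) :
    IsNC (mergeP ψ A P hA hP hne) := by
  obtain ⟨hPne, hAne, hs1, hs2⟩ := hsE
  intro i j k l h1 h2 h3 hik hjl
  obtain ⟨C, hC, hiC, hkC⟩ := hik
  obtain ⟨D, hD, hjD, hlD⟩ := hjl
  by_cases hCD : C = D
  · exact ⟨C, hC, hiC, hCD ▸ hjD⟩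
  exfalso
  rw [mergeP_parts] at hC hD
  rcases hC with rfl | ⟨hC', hCA, hCP⟩
  · rcases hD with rfl | ⟨hD', hDA, hDP⟩
    · exact hCD rfl
    · exact merge_pattern1 hNC hA hP hPne hAne hs1 hs2 hpp hD' hDA hDP hiC hkC hjD hlD
        h1 h2 h3
  · rcases hD with rfl | ⟨hD', hDA, hDP⟩
    · exact merge_pattern2 hNC hA hP hPne hAne hs1 hs2 hpp hC' hCA hCP hjD hlD hiC hkC
        h1 h2 h3
    · obtain ⟨E, hE, hiE, hjE⟩ := hNC i j k l h1 h2 h3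
        ⟨C, hC', hiC, hkC⟩ ⟨D, hD', hjD, hlD⟩
      have e1 : E = C := ψ.eq_of_mem_parts hE hC' hiE hiC
      have e2 : E = D := ψ.eq_of_mem_parts hE hD' hjE hjD
      exact hCD (e1 ▸ e2)

end MergeNC2

/-! ### the closure operation -/

def Good (θ ψ : FP m) : Prop :=
  IsNC ψ ∧ ParityPreserving ψ ∧ ExactlyTwoOuterBlocks ψ ∧
  (∀ B ∈ θ.parts, ∃ C ∈ ψ.parts, B ⊆ C) ∧
  (∀ C ∈ ψ.parts, ∃ B ∈ θ.parts, ∃ x y, IsMinOf x C ∧ IsMaxOf y C ∧ x ∈ B ∧ y ∈ B)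

noncomputable def close (ψ : FP m) : FP m :=
  if h : MergeCond ψ then
    have hmp := h.choose_spec.choose_spec
    close (mergeP ψ h.choose h.choose_spec.choose hmp.1 hmp.2.1 (sEmb_ne hmp.2.2.1))
  else ψ
termination_by ψ.parts.card
decreasing_by exact mergeP_card _ _ _

lemma merge_good {θ ψ : FP m} {A P : Finset (Fin m)} (hm : 0 < m) (heven : m % 2 = 0)
    (hG : Good θ ψ) (hmp : MergePair ψ A P) :
    Good θ (mergeP ψ A P hmp.1 hmp.2.1 (sEmb_ne hmp.2.2.1)) := by
  obtain ⟨hNC, hpar, h2, href, hmm⟩ := hG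
  refine ⟨merge_NC hNC hmp.1 hmp.2.1 _ hmp.2.2.1 hmp.2.2.2.1,
    merge_parity hmp.1 hmp.2.1 _ hpar hmp.2.2.2.2,
    merge_twoOuter hmp.1 hmp.2.1 _ hmp.2.2.1 hmp.2.2.2.1 hmp.2.2.2.2 hNC hpar h2 hm heven,
    merge_refines hmp.1 hmp.2.1 _ href, merge_minmax hmp.1 hmp.2.1 _ hmp.2.2.1 hmm⟩

lemma close_good_aux {θ : FP m} (hm : 0 < m) (heven : m % 2 = 0) :
    ∀ (k : ℕ) (ψ : FP m), ψ.parts.card ≤ k → Good θ ψ →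
      Good θ (close ψ) ∧ ¬ MergeCond (close ψ) := by
  intro k
  induction k with
  | zero =>
    intro ψ hcard hG
    exfalso
    have h1 : blk ψ ⟨0, hm⟩ ∈ ψ.parts := blk_mem ψ _
    have := Finset.card_pos.2 ⟨_, h1⟩
    omega
  | succ k ih =>
    intro ψ hcard hG
    rw [close]
    split_ifs with h
    · have hmp := h.choose_spec.choose_spec
      have hcard' := mergeP_card hmp.1 hmp.2.1 (sEmb_ne hmp.2.2.1)
      exact ih _ (by omega) (merge_good hm heven hG hmp)
    · exact ⟨hG, h⟩

lemma close_good {θ ψ : FP m} (hm : 0 < m) (heven : m % 2 = 0) (hG : Good θ ψ) :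
    Good θ (close ψ) ∧ ¬ MergeCond (close ψ) :=
  close_good_aux hm heven ψ.parts.card ψ le_rfl hG

lemma close_pres {θ : FP m} (Pr : FP m → Prop) (hm : 0 < m) (heven : m % 2 = 0)
    (hstep : ∀ (ψ : FP m) (A P : Finset (Fin m)) (hmp : MergePair ψ A P),
      Good θ ψ → Pr ψ → Pr (mergeP ψ A P hmp.1 hmp.2.1 (sEmb_ne hmp.2.2.1))) :
    ∀ (k : ℕ) (ψ : FP m), ψ.parts.card ≤ k → Good θ ψ → Pr ψ → Pr (close ψ) := by
  intro k
  induction k with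
  | zero =>
    intro ψ hcard hG hPr
    exfalso
    have h1 : blk ψ ⟨0, hm⟩ ∈ ψ.parts := blk_mem ψ _
    have := Finset.card_pos.2 ⟨_, h1⟩
    omega
  | succ k ih =>
    intro ψ hcard hG hPr
    rw [close]
    split_ifs with h
    · have hmp := h.choose_spec.choose_spec
      have hcard' := mergeP_card hmp.1 hmp.2.1 (sEmb_ne hmp.2.2.1)
      exact ih _ (by omega) (merge_good hm heven hG hmp) (hstep ψ _ _ hmp hG hPr)
    · exact hPr

/-! ### gap structure of the closed partition -/

section Gap

variable {φ : FP m} {Z : Finset (Fin m)} {z₁ z₂ : Fin m}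

/-- Any block meeting the open gap between consecutive elements of `Z` lies inside it. -/
lemma gap_inside (hNC : IsNC φ) (hZ : Z ∈ φ.parts) (h₁ : z₁ ∈ Z) (h₂ : z₂ ∈ Z)
    (hcons : ∀ w ∈ Z, ¬(z₁ < w ∧ w < z₂)) {B : Finset (Fin m)} (hB : B ∈ φ.parts)
    {g : Fin m} (hg : g ∈ B) (hg1 : z₁ < g) (hg2 : g < z₂) :
    ∀ x ∈ B, z₁ < x ∧ x < z₂ := by
  have hBZ : B ≠ Z := by
    rintro rfl
    exact hcons g hg ⟨hg1, hg2⟩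
  intro x hx
  constructor
  · by_contra hle
    push_neg at hle
    have hne : x ≠ z₁ := by
      rintro rfl
      exact hBZ (φ.eq_of_mem_parts hB hZ hx h₁)
    have hlt : x < z₁ := lt_of_le_of_ne hle hne
    have := cross hNC hlt hg1 hg2 (by rw [blk_eq_of_mem hB hx, blk_eq_of_mem hB hg])
      (by rw [blk_eq_of_mem hZ h₁, blk_eq_of_mem hZ h₂])
    rw [blk_eq_of_mem hB hx, blk_eq_of_mem hZ h₁] at this
    exact hBZ this
  · by_contra hle
    push_neg at hle
    have hne : x ≠ z₂ := by
      rintro rfl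
      exact hBZ (φ.eq_of_mem_parts hB hZ hx h₂)
    have hlt : z₂ < x := lt_of_le_of_ne hle (Ne.symm hne)
    have := cross hNC hg1 hg2 hlt (by rw [blk_eq_of_mem hZ h₁, blk_eq_of_mem hZ h₂])
      (by rw [blk_eq_of_mem hB hg, blk_eq_of_mem hB hx])
    rw [blk_eq_of_mem hZ h₁, blk_eq_of_mem hB hg] at this
    exact hBZ this.symm

/-- `Z` strictly embraces any block inside its gap. -/
lemma gap_sEmb (hZ : Z ∈ φ.parts) (h₁ : z₁ ∈ Z) (h₂ : z₂ ∈ Z)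
    {B : Finset (Fin m)} (hB : B ∈ φ.parts) (hgap : ∀ x ∈ B, z₁ < x ∧ x < z₂) :
    sEmb Z B := by
  have hZne : Z.Nonempty := parts_nonempty hZ
  have hBne : B.Nonempty := parts_nonempty hB
  refine ⟨hZne, hBne, ?_, ?_⟩
  · exact lt_of_le_of_lt (Z.min'_le z₁ h₁) (hgap _ (B.min'_mem hBne)).1
  · exact lt_of_lt_of_le (hgap _ (B.max'_mem hBne)).2 (Z.le_max' z₂ h₂)

/-- The parent of a gap block is `Z` or again a gap block. -/
lemma gap_parent (hNC : IsNC φ) (hZ : Z ∈ φ.parts) (h₁ : z₁ ∈ Z) (h₂ : z₂ ∈ Z)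
    (hcons : ∀ w ∈ Z, ¬(z₁ < w ∧ w < z₂))
    {B : Finset (Fin m)} (hB : B ∈ φ.parts) (hgap : ∀ x ∈ B, z₁ < x ∧ x < z₂) :
    parentOf φ B = Z ∨ (∀ x ∈ parentOf φ B, z₁ < x ∧ x < z₂) := by
  have hZB : sEmb Z B := gap_sEmb hZ h₁ h₂ hB hgap
  obtain ⟨hPmem, hPemb, hPprop⟩ := parent_spec hNC hB ⟨Z, hZ, hZB⟩
  set P := parentOf φ B with hPdef
  by_cases hmeet : ∃ g ∈ P, z₁ < g ∧ g < z₂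
  · obtain ⟨g, hg, hg1, hg2⟩ := hmeet
    exact Or.inr (gap_inside hNC hZ h₁ h₂ hcons hPmem hg hg1 hg2)
  push_neg at hmeet
  left
  obtain ⟨hPne, hBne, hp1, hp2⟩ := hPemb
  have hBne' : B.Nonempty := parts_nonempty hB
  -- min' P ≤ z₁
  have hminB := hgap _ (B.min'_mem hBne)
  have hmaxB := hgap _ (B.max'_mem hBne)
  have hminP : P.min' hPne ≤ z₁ := by
    by_contra hgt
    push_neg at hgt
    exact absurd (hmeet _ (P.min'_mem hPne) hgt) (by push_neg; exact lt_trans hp1 hminB.2)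
  have hmaxP : z₂ ≤ P.max' hPne := by
    by_contra hgt
    push_neg at hgt
    exact absurd (hmeet _ (P.max'_mem hPne) (lt_trans hmaxB.1 hp2)) (by push_neg; exact hgt)
  rcases eq_or_lt_of_le hminP with heq | hminPlt
  · exact φ.eq_of_mem_parts hPmem hZ (heq ▸ P.min'_mem hPne) h₁
  rcases eq_or_lt_of_le hmaxP with heq | hmaxPlt
  · exact φ.eq_of_mem_parts hPmem hZ (heq ▸ P.max'_mem hPne) h₂
  -- min' P < z₁ and z₂ < max' P : use the parent property against Z
  obtain ⟨hZne', hPne', hw1, hw2⟩ := hPprop Z hZ hZB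
  have hZne : Z.Nonempty := parts_nonempty hZ
  rcases eq_or_lt_of_le (show Z.min' hZne ≤ P.min' hPne from hw1) with heq | hZPlt
  · exact φ.eq_of_mem_parts hPmem hZ (P.min'_mem hPne) (heq ▸ Z.min'_mem hZne)
  · have := cross hNC hZPlt hminPlt
        (lt_trans (show z₁ < z₂ from lt_trans hminB.1 hminB.2) hmaxPlt)
      (by rw [blk_eq_of_mem hZ (Z.min'_mem hZne), blk_eq_of_mem hZ h₁])
      (by rw [blk_eq_of_mem hPmem (P.min'_mem hPne), blk_eq_of_mem hPmem (P.max'_mem hPne)])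
    rw [blk_eq_of_mem hZ (Z.min'_mem hZne), blk_eq_of_mem hPmem (P.min'_mem hPne)] at this
    exact this.symm

end Gap

section Tops

variable {θ φ : FP m} {Z : Finset (Fin m)} {z₁ z₂ : Fin m}

/-- A *top* block of the gap: a gap block whose parent is `Z`. -/
def IsTop (φ : FP m) (Z : Finset (Fin m)) (z₁ z₂ : Fin m) (T : Finset (Fin m)) : Prop :=
  T ∈ φ.parts ∧ (∀ x ∈ T, z₁ < x ∧ x < z₂) ∧ parentOf φ T = Z

lemma top_exists (hNC : IsNC φ) (hZ : Z ∈ φ.parts) (h₁ : z₁ ∈ Z) (h₂ : z₂ ∈ Z)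
    (hcons : ∀ w ∈ Z, ¬(z₁ < w ∧ w < z₂)) :
    ∀ (k : ℕ) (B : Finset (Fin m)), B ∈ φ.parts → (∀ x ∈ B, z₁ < x ∧ x < z₂) →
    ∀ (hBne : B.Nonempty),
    z₂.val - ((B.max' hBne).val - (B.min' hBne).val) ≤ k →
    ∃ T, IsTop φ Z z₁ z₂ T ∧ ∀ (hTne : T.Nonempty),
      (T.min' hTne ≤ B.min' hBne ∧ B.max' hBne ≤ T.max' hTne) := by
  intro k
  induction k with
  | zero =>
    intro B hB hgap hBne hk
    exfalso
    have c1 : z₁.val < (B.min' hBne).val := (hgap _ (B.min'_mem hBne)).1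
    have c2 : (B.max' hBne).val < z₂.val := (hgap _ (B.max'_mem hBne)).2
    have c3 : (B.min' hBne).val ≤ (B.max' hBne).val := B.min'_le _ (B.max'_mem hBne)
    omega
  | succ k ih =>
    intro B hB hgap hBne hk
    rcases gap_parent hNC hZ h₁ h₂ hcons hB hgap with hPZ | hPgap
    · exact ⟨B, ⟨hB, hgap, hPZ⟩, fun hTne => ⟨le_of_eq rfl, le_of_eq rfl⟩⟩
    · obtain ⟨hPmem, hPemb, -⟩ := parent_spec hNC hB ⟨Z, hZ, gap_sEmb hZ h₁ h₂ hB hgap⟩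
      obtain ⟨hPne, hBne', hp1, hp2⟩ := hPemb
      have c1 : ((parentOf φ B).min' hPne).val < (B.min' hBne).val := by
        have : B.min' hBne' = B.min' hBne := rfl
        rw [← this]; exact hp1
      have c2 : (B.max' hBne).val < ((parentOf φ B).max' hPne).val := by
        have : B.max' hBne' = B.max' hBne := rfl
        rw [← this]; exact hp2
      have c3 : (B.min' hBne).val ≤ (B.max' hBne).val := B.min'_le _ (B.max'_mem hBne)
      have d1 : z₁.val < ((parentOf φ B).min' hPne).val :=
        (hPgap _ ((parentOf φ B).min'_mem hPne)).1
      have d2 : ((parentOf φ B).max' hPne).val < z₂.val :=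
        (hPgap _ ((parentOf φ B).max'_mem hPne)).2
      have hk' : z₂.val - (((parentOf φ B).max' hPne).val -
          ((parentOf φ B).min' hPne).val) ≤ k := by omega
      obtain ⟨T, hT, hTspan⟩ := ih (parentOf φ B) hPmem hPgap hPne hk'
      refine ⟨T, hT, fun hTne => ?_⟩
      obtain ⟨t1, t2⟩ := hTspan hTne
      refine ⟨le_trans t1 ?_, le_trans ?_ t2⟩
      · exact le_of_lt c1
      · exact le_of_lt c2

lemma top_not_nested (hNC : IsNC φ) (hZ : Z ∈ φ.parts) (h₁ : z₁ ∈ Z) (h₂ : z₂ ∈ Z)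
    {T T' : Finset (Fin m)} (hT : T ∈ φ.parts) (hTgap : ∀ x ∈ T, z₁ < x ∧ x < z₂)
    (hT' : IsTop φ Z z₁ z₂ T') (hemb : sEmb T T') : False := by
  obtain ⟨hT'mem, hT'gap, hT'par⟩ := hT'
  obtain ⟨-, -, hprop⟩ := parent_spec hNC hT'mem ⟨Z, hZ, gap_sEmb hZ h₁ h₂ hT'mem hT'gap⟩
  have := hprop T hT hemb
  rw [hT'par] at this
  obtain ⟨hTne, hZne, hw1, -⟩ := this
  have c1 : (T.min' hTne).val ≤ (Z.min' hZne).val := hw1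
  have c2 : (Z.min' hZne).val ≤ z₁.val := Z.min'_le z₁ h₁
  have c3 : z₁.val < (T.min' hTne).val := (hTgap _ (T.min'_mem hTne)).1
  omega

lemma tops_span_disjoint (hNC : IsNC φ) (hZ : Z ∈ φ.parts) (h₁ : z₁ ∈ Z) (h₂ : z₂ ∈ Z)
    {T T' : Finset (Fin m)} (hT : IsTop φ Z z₁ z₂ T) (hT' : IsTop φ Z z₁ z₂ T')
    (hne : T ≠ T') (hTne : T.Nonempty) (hT'ne : T'.Nonempty) :
    (T.max' hTne).val < (T'.min' hT'ne).val ∨ (T'.max' hT'ne).val < (T.min' hTne).val := by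
  by_contra hcon
  push_neg at hcon
  obtain ⟨hc1, hc2⟩ := hcon
  have key : ∀ (S S' : Finset (Fin m)), IsTop φ Z z₁ z₂ S → IsTop φ Z z₁ z₂ S' → S ≠ S' →
      ∀ (hSne : S.Nonempty) (hS'ne : S'.Nonempty),
      S.min' hSne < S'.min' hS'ne → S'.min' hS'ne ≤ S.max' hSne → False := by
    intro S S' hS hS' hSS' hSne hS'ne hlt hle
    rcases eq_or_lt_of_le hle with heq | hlt2
    · exact hSS' (φ.eq_of_mem_parts hS.1 hS'.1 (S.max'_mem hSne)
        (heq ▸ S'.min'_mem hS'ne))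
    · have hnest := nest hNC hS'.1 hS.1 (Ne.symm hSS') hSne (S'.min'_mem hS'ne) hlt hlt2
      have hsE : sEmb S S' :=
        ⟨hSne, hS'ne, hlt, (hnest _ (S'.max'_mem hS'ne)).2⟩
      exact top_not_nested hNC hZ h₁ h₂ hS.1 hS.2.1 hS' hsE
  rcases lt_trichotomy (T.min' hTne) (T'.min' hT'ne) with h | h | h
  · exact key T T' hT hT' hne hTne hT'ne h (by
      have : (T'.min' hT'ne).val ≤ (T.max' hTne).val := hc1
      exact_mod_cast Fin.le_def.2 this)
  · exact hne (φ.eq_of_mem_parts hT.1 hT'.1 (T.min'_mem hTne) (h ▸ T'.min'_mem hT'ne))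
  · exact key T' T hT' hT (Ne.symm hne) hT'ne hTne h (by
      have : (T.min' hTne).val ≤ (T'.max' hT'ne).val := hc2
      exact_mod_cast Fin.le_def.2 this)

end Tops

section Tops2

variable {φ : FP m} {Z : Finset (Fin m)} {z₁ z₂ : Fin m}

lemma top_parity (hNC : IsNC φ) (hpar : ParityPreserving φ) (hnm : ¬ MergeCond φ)
    (hZ : Z ∈ φ.parts) (h₁ : z₁ ∈ Z) (h₂ : z₂ ∈ Z)
    {T : Finset (Fin m)} (hT : IsTop φ Z z₁ z₂ T) :
    ∀ t ∈ T, ∀ z ∈ Z, t.val % 2 ≠ z.val % 2 := by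
  obtain ⟨hTmem, hTgap, hTpar⟩ := hT
  have hsE : sEmb Z T := gap_sEmb hZ h₁ h₂ hTmem hTgap
  obtain ⟨-, -, hprop⟩ := parent_spec hNC hTmem ⟨Z, hZ, hsE⟩
  have hprop' : ∀ B ∈ φ.parts, sEmb B T → wEmb B Z := by
    intro B hB h
    have := hprop B hB h
    rwa [hTpar] at this
  have hnsp : ¬ SameParity T Z := by
    intro hsp
    exact hnm ⟨T, Z, hTmem, hZ, hsE, hprop', hsp⟩
  have hopp := opposite_of_not_same (parts_nonempty hTmem) (parts_nonempty hZ)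
    (hpar _ hTmem) (hpar _ hZ) hnsp
  intro t ht z hz
  rcases hopp with ⟨hoT, heZ⟩ | ⟨heT, hoZ⟩
  · rw [hoT t ht, heZ z hz]; omega
  · rw [heT t ht, hoZ z hz]; omega

lemma top_max (hNC : IsNC φ) (hpar : ParityPreserving φ) (hnm : ¬ MergeCond φ)
    (hZ : Z ∈ φ.parts) (h₁ : z₁ ∈ Z) (h₂ : z₂ ∈ Z)
    (hcons : ∀ w ∈ Z, ¬(z₁ < w ∧ w < z₂))
    {T : Finset (Fin m)} (hT : IsTop φ Z z₁ z₂ T) (hTne : T.Nonempty) :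
    (T.max' hTne).val = z₂.val - 1 := by
  have hub : (T.max' hTne).val < z₂.val := (hT.2.1 _ (T.max'_mem hTne)).2
  by_contra hne
  have hlt : (T.max' hTne).val + 1 < z₂.val := by omega
  have hxm : (T.max' hTne).val + 1 < m := lt_trans hlt z₂.isLt
  set x : Fin m := ⟨(T.max' hTne).val + 1, hxm⟩ with hxdef
  have hx1 : z₁ < x := by
    have : z₁.val < (T.max' hTne).val := (hT.2.1 _ (T.max'_mem hTne)).1
    show z₁.val < x.val
    simp only [hxdef]
    omega
  have hx2 : x < z₂ := hlt
  have hBgap := gap_inside hNC hZ h₁ h₂ hcons (blk_mem φ x) (mem_blk φ x) hx1 hx2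
  have hBne : (blk φ x).Nonempty := parts_nonempty (blk_mem φ x)
  obtain ⟨T', hT', hspan⟩ := top_exists hNC hZ h₁ h₂ hcons z₂.val (blk φ x)
    (blk_mem φ x) hBgap hBne (by omega)
  have hT'ne : T'.Nonempty := parts_nonempty hT'.1
  obtain ⟨hs1, hs2⟩ := hspan hT'ne
  have hxlow : (T'.min' hT'ne).val ≤ x.val := le_trans hs1 ((blk φ x).min'_le x (mem_blk φ x))
  have hxhigh : x.val ≤ (T'.max' hT'ne).val := le_trans ((blk φ x).le_max' x (mem_blk φ x)) hs2
  have hTT' : T ≠ T' := by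
    rintro rfl
    have : x.val ≤ (T.max' hTne).val := by
      have e : T.max' hT'ne = T.max' hTne := rfl
      rw [← e]; exact hxhigh
    simp only [hxdef] at this
    omega
  rcases tops_span_disjoint hNC hZ h₁ h₂ hT hT' hTT' hTne hT'ne with h | h
  · -- min' T' = max' T + 1 : parity contradiction
    have hminT' : (T'.min' hT'ne).val = (T.max' hTne).val + 1 := by
      simp only [hxdef] at hxlow
      omega
    have p1 := top_parity hNC hpar hnm hZ h₁ h₂ hT _ (T.max'_mem hTne) z₁ h₁
    have p2 := top_parity hNC hpar hnm hZ h₁ h₂ hT' _ (T'.min'_mem hT'ne) z₁ h₁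
    omega
  · have hc : (T.min' hTne).val ≤ (T.max' hTne).val := T.min'_le _ (T.max'_mem hTne)
    simp only [hxdef] at hxhigh
    omega

lemma top_min (hNC : IsNC φ) (hpar : ParityPreserving φ) (hnm : ¬ MergeCond φ)
    (hZ : Z ∈ φ.parts) (h₁ : z₁ ∈ Z) (h₂ : z₂ ∈ Z)
    (hcons : ∀ w ∈ Z, ¬(z₁ < w ∧ w < z₂))
    {T : Finset (Fin m)} (hT : IsTop φ Z z₁ z₂ T) (hTne : T.Nonempty) :
    (T.min' hTne).val = z₁.val + 1 := by
  have hlb : z₁.val < (T.min' hTne).val := (hT.2.1 _ (T.min'_mem hTne)).1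
  by_contra hne
  have hlt : z₁.val + 1 < (T.min' hTne).val := by omega
  have hxm : (T.min' hTne).val - 1 < m := lt_trans (by omega : (T.min' hTne).val - 1 <
    (T.min' hTne).val) (T.min' hTne).isLt
  set x : Fin m := ⟨(T.min' hTne).val - 1, hxm⟩ with hxdef
  have hx1 : z₁ < x := by
    show z₁.val < x.val
    simp only [hxdef]
    omega
  have hx2 : x < z₂ := by
    show x.val < z₂.val
    have : (T.min' hTne).val < z₂.val := (hT.2.1 _ (T.min'_mem hTne)).2
    simp only [hxdef]
    omega
  have hBgap := gap_inside hNC hZ h₁ h₂ hcons (blk_mem φ x) (mem_blk φ x) hx1 hx2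
  have hBne : (blk φ x).Nonempty := parts_nonempty (blk_mem φ x)
  obtain ⟨T', hT', hspan⟩ := top_exists hNC hZ h₁ h₂ hcons z₂.val (blk φ x)
    (blk_mem φ x) hBgap hBne (by omega)
  have hT'ne : T'.Nonempty := parts_nonempty hT'.1
  obtain ⟨hs1, hs2⟩ := hspan hT'ne
  have hxlow : (T'.min' hT'ne).val ≤ x.val := le_trans hs1 ((blk φ x).min'_le x (mem_blk φ x))
  have hxhigh : x.val ≤ (T'.max' hT'ne).val := le_trans ((blk φ x).le_max' x (mem_blk φ x)) hs2
  have hTT' : T ≠ T' := by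
    rintro rfl
    have : (T.min' hTne).val ≤ x.val := by
      have e : T.min' hT'ne = T.min' hTne := rfl
      rw [← e]; exact hxlow
    simp only [hxdef] at this
    omega
  rcases tops_span_disjoint hNC hZ h₁ h₂ hT hT' hTT' hTne hT'ne with h | h
  · -- max' T < min' T' but min' T' ≤ x < min' T ≤ max' T : contradiction
    have hc : (T.min' hTne).val ≤ (T.max' hTne).val := T.min'_le _ (T.max'_mem hTne)
    simp only [hxdef] at hxlow
    omega
  · -- max' T' = min' T - 1 : parity contradiction
    have hmaxT' : (T'.max' hT'ne).val = (T.min' hTne).val - 1 := by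
      simp only [hxdef] at hxhigh
      omega
    have p1 := top_parity hNC hpar hnm hZ h₁ h₂ hT _ (T.min'_mem hTne) z₁ h₁
    have p2 := top_parity hNC hpar hnm hZ h₁ h₂ hT' _ (T'.max'_mem hT'ne) z₁ h₁
    omega

lemma top_unique (hNC : IsNC φ) (hpar : ParityPreserving φ) (hnm : ¬ MergeCond φ)
    (hZ : Z ∈ φ.parts) (h₁ : z₁ ∈ Z) (h₂ : z₂ ∈ Z)
    (hcons : ∀ w ∈ Z, ¬(z₁ < w ∧ w < z₂))
    {T T' : Finset (Fin m)} (hT : IsTop φ Z z₁ z₂ T) (hT' : IsTop φ Z z₁ z₂ T') : T = T' := by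
  have hTne : T.Nonempty := parts_nonempty hT.1
  have hT'ne : T'.Nonempty := parts_nonempty hT'.1
  have e1 := top_max hNC hpar hnm hZ h₁ h₂ hcons hT hTne
  have e2 := top_max hNC hpar hnm hZ h₁ h₂ hcons hT' hT'ne
  have : T.max' hTne = T'.max' hT'ne := Fin.ext (by omega)
  exact φ.eq_of_mem_parts hT.1 hT'.1 (T.max'_mem hTne) (this ▸ T'.max'_mem hT'ne)

lemma gap_main (hNC : IsNC φ) (hpar : ParityPreserving φ) (hnm : ¬ MergeCond φ)
    (hZ : Z ∈ φ.parts) (h₁ : z₁ ∈ Z) (h₂ : z₂ ∈ Z)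
    (hcons : ∀ w ∈ Z, ¬(z₁ < w ∧ w < z₂)) (hlt : z₁.val + 1 < z₂.val) :
    ∃ E, IsTop φ Z z₁ z₂ E ∧ ∀ (hEne : E.Nonempty),
      (E.min' hEne).val = z₁.val + 1 ∧ (E.max' hEne).val = z₂.val - 1 := by
  have hxm : z₂.val - 1 < m := lt_trans (by omega) z₂.isLt
  set x : Fin m := ⟨z₂.val - 1, hxm⟩ with hxdef
  have hx1 : z₁ < x := by show z₁.val < x.val; simp only [hxdef]; omega
  have hx2 : x < z₂ := by show x.val < z₂.val; simp only [hxdef]; omega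
  have hBgap := gap_inside hNC hZ h₁ h₂ hcons (blk_mem φ x) (mem_blk φ x) hx1 hx2
  have hBne : (blk φ x).Nonempty := parts_nonempty (blk_mem φ x)
  obtain ⟨T, hT, -⟩ := top_exists hNC hZ h₁ h₂ hcons z₂.val (blk φ x)
    (blk_mem φ x) hBgap hBne (by omega)
  exact ⟨T, hT, fun hTne => ⟨top_min hNC hpar hnm hZ h₁ h₂ hcons hT hTne,
    top_max hNC hpar hnm hZ h₁ h₂ hcons hT hTne⟩⟩

end Tops2

section AssocPerm

variable {k : ℕ}

noncomputable def nextIn (ψ : FP k) (a : Fin k) : Fin k :=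
  if h : ((blk ψ a).filter (fun x => a < x)).Nonempty then
    ((blk ψ a).filter (fun x => a < x)).min' h
  else (blk ψ a).min' (parts_nonempty (blk_mem ψ a))

lemma nextIn_mem (ψ : FP k) (a : Fin k) : nextIn ψ a ∈ blk ψ a := by
  rw [nextIn]
  split_ifs with h
  · exact (Finset.mem_filter.1 (Finset.min'_mem _ h)).1
  · exact Finset.min'_mem _ _

lemma nextIn_case1 (ψ : FP k) (a : Fin k)
    (h : ((blk ψ a).filter (fun x => a < x)).Nonempty) :
    a < nextIn ψ a ∧ ∀ x ∈ blk ψ a, a < x → nextIn ψ a ≤ x := by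
  rw [nextIn, dif_pos h]
  constructor
  · exact (Finset.mem_filter.1 (Finset.min'_mem _ h)).2
  · intro x hx hax
    exact Finset.min'_le _ x (Finset.mem_filter.2 ⟨hx, hax⟩)

lemma nextIn_case2 (ψ : FP k) (a : Fin k)
    (h : ¬ ((blk ψ a).filter (fun x => a < x)).Nonempty) :
    (∀ x ∈ blk ψ a, x ≤ a) ∧ nextIn ψ a = (blk ψ a).min' (parts_nonempty (blk_mem ψ a)) := by
  rw [nextIn, dif_neg h]
  refine ⟨?_, rfl⟩
  intro x hx
  by_contra hlt
  push_neg at hlt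
  exact h ⟨x, Finset.mem_filter.2 ⟨hx, hlt⟩⟩

lemma nextIn_injective (ψ : FP k) : Function.Injective (nextIn ψ) := by
  intro a a' heq
  by_contra hne
  have hmem : nextIn ψ a ∈ blk ψ a := nextIn_mem ψ a
  have hmem' : nextIn ψ a ∈ blk ψ a' := heq ▸ nextIn_mem ψ a'
  have hblk : blk ψ a = blk ψ a' :=
    ψ.eq_of_mem_parts (blk_mem ψ a) (blk_mem ψ a') hmem hmem'
  by_cases h1 : ((blk ψ a).filter (fun x => a < x)).Nonempty <;>
    by_cases h2 : ((blk ψ a').filter (fun x => a' < x)).Nonempty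
  · obtain ⟨hlt, hmin⟩ := nextIn_case1 ψ a h1
    obtain ⟨hlt', hmin'⟩ := nextIn_case1 ψ a' h2
    rcases lt_trichotomy a a' with h | h | h
    · have ha' : a' ∈ blk ψ a := hblk.symm ▸ mem_blk ψ a'
      have := hmin a' ha' h
      rw [heq] at this
      exact absurd hlt' (not_lt_of_ge this)
    · exact hne h
    · have ha : a ∈ blk ψ a' := hblk ▸ mem_blk ψ a
      have := hmin' a ha h
      rw [← heq] at this
      exact absurd hlt (not_lt_of_ge this)
  · obtain ⟨hlt, -⟩ := nextIn_case1 ψ a h1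
    obtain ⟨-, hval⟩ := nextIn_case2 ψ a' h2
    have : nextIn ψ a = (blk ψ a').min' (parts_nonempty (blk_mem ψ a')) := heq ▸ hval
    have hle : nextIn ψ a ≤ a := by
      rw [this]
      exact Finset.min'_le _ a (hblk ▸ mem_blk ψ a)
    exact absurd hlt (not_lt_of_ge hle)
  · obtain ⟨hlt, -⟩ := nextIn_case1 ψ a' h2
    obtain ⟨-, hval⟩ := nextIn_case2 ψ a h1
    have : nextIn ψ a' = (blk ψ a).min' (parts_nonempty (blk_mem ψ a)) := heq ▸ hval
    have hle : nextIn ψ a' ≤ a' := by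
      rw [this]
      exact Finset.min'_le _ a' (hblk.symm ▸ mem_blk ψ a')
    exact absurd hlt (not_lt_of_ge hle)
  · obtain ⟨hmax, -⟩ := nextIn_case2 ψ a h1
    obtain ⟨hmax', -⟩ := nextIn_case2 ψ a' h2
    have c1 : a ≤ a' := hmax' a (hblk ▸ mem_blk ψ a)
    have c2 : a' ≤ a := hmax a' (hblk.symm ▸ mem_blk ψ a')
    exact hne (le_antisymm c1 c2)

noncomputable def assocPerm (ψ : FP k) : Equiv.Perm (Fin k) :=
  Equiv.ofBijective (nextIn ψ) (Finite.injective_iff_bijective.1 (nextIn_injective ψ))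

lemma assocPerm_apply (ψ : FP k) (a : Fin k) : assocPerm ψ a = nextIn ψ a := rfl

lemma assocPerm_isAssoc (ψ : FP k) : IsAssocPerm ψ (assocPerm ψ) := by
  intro B hB b hb
  have hblk : blk ψ b = B := blk_eq_of_mem hB hb
  rw [assocPerm_apply]
  constructor
  · exact hblk ▸ nextIn_mem ψ b
  by_cases h : ((blk ψ b).filter (fun x => b < x)).Nonempty
  · left
    obtain ⟨h1, h2⟩ := nextIn_case1 ψ b h
    exact ⟨h1, fun x hx hbx => h2 x (hblk.symm ▸ hx) hbx⟩
  · right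
    obtain ⟨h1, h2⟩ := nextIn_case2 ψ b h
    refine ⟨⟨hb, fun y hy => h1 y (hblk.symm ▸ hy)⟩, ?_⟩
    rw [h2]
    have : (blk ψ b).min' (parts_nonempty (blk_mem ψ b)) = B.min' (parts_nonempty hB) := by
      congr 1
    rw [this]
    exact isMinOf_min' _

/-- computing the inverse of the associated permutation: predecessor case -/
lemma assocPerm_inv_prev {ψ : FP k} {B : Finset (Fin k)} (hB : B ∈ ψ.parts) {c d : Fin k}
    (hc : c ∈ B) (hd : d ∈ B) (hdc : d < c) (hcons : ∀ x ∈ B, ¬(d < x ∧ x < c)) :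
    (assocPerm ψ)⁻¹ c = d := by
  rw [Equiv.Perm.inv_def, Equiv.symm_apply_eq]
  show c = nextIn ψ d
  have hblk : blk ψ d = B := blk_eq_of_mem hB hd
  have hfil : ((blk ψ d).filter (fun x => d < x)).Nonempty :=
    ⟨c, Finset.mem_filter.2 ⟨hblk.symm ▸ hc, hdc⟩⟩
  obtain ⟨h1, h2⟩ := nextIn_case1 ψ d hfil
  have hle : nextIn ψ d ≤ c := h2 c (hblk.symm ▸ hc) hdc
  rcases eq_or_lt_of_le hle with heq | hlt
  · exact heq.symm
  · exfalso
    exact hcons (nextIn ψ d) (hblk ▸ nextIn_mem ψ d) ⟨h1, hlt⟩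

/-- computing the inverse of the associated permutation: wrap-around case -/
lemma assocPerm_inv_min {ψ : FP k} {B : Finset (Fin k)} (hB : B ∈ ψ.parts) {c d : Fin k}
    (hc : IsMinOf c B) (hd : IsMaxOf d B) :
    (assocPerm ψ)⁻¹ c = d := by
  rw [Equiv.Perm.inv_def, Equiv.symm_apply_eq]
  show c = nextIn ψ d
  have hblk : blk ψ d = B := blk_eq_of_mem hB hd.1
  have hfil : ¬ ((blk ψ d).filter (fun x => d < x)).Nonempty := by
    rintro ⟨x, hx⟩
    rw [Finset.mem_filter, hblk] at hx
    exact absurd (hd.2 x hx.1) (not_le_of_gt hx.2)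
  obtain ⟨-, h2⟩ := nextIn_case2 ψ d hfil
  rw [h2]
  rw [isMinOf_iff (parts_nonempty hB)] at hc
  rw [hc]
  congr 1
  exact hblk.symm

end AssocPerm

section OddEven

variable {n : ℕ}

def half (x : Fin (2*n)) : Fin n := ⟨x.val / 2, by have := x.isLt; omega⟩

@[simp] lemma oddEmb_val (a : Fin n) : (oddEmb a).val = 2 * a.val := rfl
@[simp] lemma evenEmb_val (a : Fin n) : (evenEmb a).val = 2 * a.val + 1 := rfl
@[simp] lemma half_val (x : Fin (2*n)) : (half x).val = x.val / 2 := rfl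

lemma oddEmb_half {x : Fin (2*n)} (hx : x.val % 2 = 0) : oddEmb (half x) = x :=
  Fin.ext (by simp; omega)

lemma evenEmb_half {x : Fin (2*n)} (hx : x.val % 2 = 1) : evenEmb (half x) = x :=
  Fin.ext (by simp; omega)

lemma half_oddEmb (a : Fin n) : half (oddEmb a) = a := Fin.ext (by simp)
lemma half_evenEmb (a : Fin n) : evenEmb (half (evenEmb a)) = evenEmb a :=
  evenEmb_half (by simp)
lemma half_evenEmb' (a : Fin n) : half (evenEmb a) = a := Fin.ext (by simp; omega)

lemma oddEmb_lt_iff {a b : Fin n} : oddEmb a < oddEmb b ↔ a < b := by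
  constructor <;> intro h
  · have h' : 2 * a.val < 2 * b.val := h
    show a.val < b.val
    omega
  · have h' : a.val < b.val := h
    show 2*a.val < 2*b.val
    omega

lemma evenEmb_lt_iff {a b : Fin n} : evenEmb a < evenEmb b ↔ a < b := by
  constructor <;> intro h
  · have h' : 2 * a.val + 1 < 2 * b.val + 1 := h
    show a.val < b.val
    omega
  · have h' : a.val < b.val := h
    show 2*a.val+1 < 2*b.val+1
    omega

variable {φ : FP (2*n)}

lemma blk_odd (hpar : ParityPreserving φ) (a : Fin n) : OddBlock (blk φ (oddEmb a)) := by
  rcases hpar _ (blk_mem φ (oddEmb a)) with h | h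
  · exact h
  · have := h _ (mem_blk φ (oddEmb a))
    simp at this

lemma blk_even (hpar : ParityPreserving φ) (a : Fin n) : EvenBlock (blk φ (evenEmb a)) := by
  rcases hpar _ (blk_mem φ (evenEmb a)) with h | h
  · have := h _ (mem_blk φ (evenEmb a))
    simp at this
  · exact h

lemma mem_image_half_iff_odd {B : Finset (Fin (2*n))} (hB : OddBlock B) {a : Fin n} :
    a ∈ B.image half ↔ oddEmb a ∈ B := by
  constructor
  · rintro h
    obtain ⟨x, hx, rfl⟩ := Finset.mem_image.1 h
    rwa [oddEmb_half (hB x hx)]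
  · intro h
    exact half_oddEmb a ▸ Finset.mem_image_of_mem half h

lemma mem_image_half_iff_even {B : Finset (Fin (2*n))} (hB : EvenBlock B) {a : Fin n} :
    a ∈ B.image half ↔ evenEmb a ∈ B := by
  constructor
  · rintro h
    obtain ⟨x, hx, rfl⟩ := Finset.mem_image.1 h
    rwa [evenEmb_half (hB x hx)]
  · intro h
    exact half_evenEmb' a ▸ Finset.mem_image_of_mem half h

lemma image_oddEmb_half {B : Finset (Fin (2*n))} (hB : OddBlock B) :
    (B.image half).image oddEmb = B := by
  rw [Finset.image_image]
  apply Finset.ext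
  intro x
  rw [Finset.mem_image]
  constructor
  · rintro ⟨y, hy, rfl⟩
    rwa [Function.comp_apply, oddEmb_half (hB y hy)]
  · intro hx
    exact ⟨x, hx, by rw [Function.comp_apply, oddEmb_half (hB x hx)]⟩

lemma image_evenEmb_half {B : Finset (Fin (2*n))} (hB : EvenBlock B) :
    (B.image half).image evenEmb = B := by
  rw [Finset.image_image]
  apply Finset.ext
  intro x
  rw [Finset.mem_image]
  constructor
  · rintro ⟨y, hy, rfl⟩
    rwa [Function.comp_apply, evenEmb_half (hB y hy)]
  · intro hx
    exact ⟨x, hx, by rw [Function.comp_apply, evenEmb_half (hB x hx)]⟩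

noncomputable def oddPart (φ : FP (2*n)) (hpar : ParityPreserving φ) : FP n :=
  mkFP ((φ.parts.filter OddBlock).image (fun B => B.image half))
    (by
      intro B' hB' C' hC' hne
      obtain ⟨B, hB, rfl⟩ := Finset.mem_image.1 hB'
      obtain ⟨C, hC, rfl⟩ := Finset.mem_image.1 hC'
      rw [Finset.mem_filter] at hB hC
      have hBC : B ≠ C := fun h => hne (by rw [h])
      rw [Finset.disjoint_left]
      intro a haB haC
      rw [mem_image_half_iff_odd hB.2] at haB
      rw [mem_image_half_iff_odd hC.2] at haC
      exact hBC (φ.eq_of_mem_parts hB.1 hC.1 haB haC))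
    (by
      intro a
      refine ⟨(blk φ (oddEmb a)).image half, ?_, ?_⟩
      · exact Finset.mem_image_of_mem _ (Finset.mem_filter.2 ⟨blk_mem φ _, blk_odd hpar a⟩)
      · rw [mem_image_half_iff_odd (blk_odd hpar a)]
        exact mem_blk φ _)
    (by
      intro h
      obtain ⟨B, hB, hBe⟩ := Finset.mem_image.1 h
      rw [Finset.mem_filter] at hB
      obtain ⟨x, hx⟩ := parts_nonempty hB.1
      exact absurd (Finset.mem_image_of_mem half hx) (hBe ▸ Finset.notMem_empty _))

noncomputable def evenPart (φ : FP (2*n)) (hpar : ParityPreserving φ) : FP n :=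
  mkFP ((φ.parts.filter EvenBlock).image (fun B => B.image half))
    (by
      intro B' hB' C' hC' hne
      obtain ⟨B, hB, rfl⟩ := Finset.mem_image.1 hB'
      obtain ⟨C, hC, rfl⟩ := Finset.mem_image.1 hC'
      rw [Finset.mem_filter] at hB hC
      have hBC : B ≠ C := fun h => hne (by rw [h])
      rw [Finset.disjoint_left]
      intro a haB haC
      rw [mem_image_half_iff_even hB.2] at haB
      rw [mem_image_half_iff_even hC.2] at haC
      exact hBC (φ.eq_of_mem_parts hB.1 hC.1 haB haC))
    (by
      intro a
      refine ⟨(blk φ (evenEmb a)).image half, ?_, ?_⟩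
      · exact Finset.mem_image_of_mem _ (Finset.mem_filter.2 ⟨blk_mem φ _, blk_even hpar a⟩)
      · rw [mem_image_half_iff_even (blk_even hpar a)]
        exact mem_blk φ _)
    (by
      intro h
      obtain ⟨B, hB, hBe⟩ := Finset.mem_image.1 h
      rw [Finset.mem_filter] at hB
      obtain ⟨x, hx⟩ := parts_nonempty hB.1
      exact absurd (Finset.mem_image_of_mem half hx) (hBe ▸ Finset.notMem_empty _))

lemma oddPart_parts (hpar : ParityPreserving φ) :
    (oddPart φ hpar).parts = (φ.parts.filter OddBlock).image (fun B => B.image half) := rfl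

lemma evenPart_parts (hpar : ParityPreserving φ) :
    (evenPart φ hpar).parts = (φ.parts.filter EvenBlock).image (fun B => B.image half) := rfl

lemma blk_oddPart (hpar : ParityPreserving φ) (a : Fin n) :
    blk (oddPart φ hpar) a = (blk φ (oddEmb a)).image half := by
  apply blk_eq_of_mem
  · rw [oddPart_parts]
    exact Finset.mem_image_of_mem _ (Finset.mem_filter.2 ⟨blk_mem φ _, blk_odd hpar a⟩)
  · rw [mem_image_half_iff_odd (blk_odd hpar a)]
    exact mem_blk φ _

lemma blk_evenPart (hpar : ParityPreserving φ) (a : Fin n) :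
    blk (evenPart φ hpar) a = (blk φ (evenEmb a)).image half := by
  apply blk_eq_of_mem
  · rw [evenPart_parts]
    exact Finset.mem_image_of_mem _ (Finset.mem_filter.2 ⟨blk_mem φ _, blk_even hpar a⟩)
  · rw [mem_image_half_iff_even (blk_even hpar a)]
    exact mem_blk φ _

lemma sameBlock_oddPart (hpar : ParityPreserving φ) {a b : Fin n} :
    SameBlock (oddPart φ hpar) a b ↔ SameBlock φ (oddEmb a) (oddEmb b) := by
  rw [sameBlock_iff, sameBlock_iff, blk_oddPart hpar, blk_oddPart hpar]
  constructor
  · intro h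
    have := congrArg (fun s => Finset.image oddEmb s) h
    simpa only [image_oddEmb_half (blk_odd hpar a), image_oddEmb_half (blk_odd hpar b)]
      using this
  · intro h
    rw [h]

lemma sameBlock_evenPart (hpar : ParityPreserving φ) {a b : Fin n} :
    SameBlock (evenPart φ hpar) a b ↔ SameBlock φ (evenEmb a) (evenEmb b) := by
  rw [sameBlock_iff, sameBlock_iff, blk_evenPart hpar, blk_evenPart hpar]
  constructor
  · intro h
    have := congrArg (fun s => Finset.image evenEmb s) h
    simpa only [image_evenEmb_half (blk_even hpar a), image_evenEmb_half (blk_even hpar b)]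
      using this
  · intro h
    rw [h]

lemma oddPart_NC (hpar : ParityPreserving φ) (hNC : IsNC φ) : IsNC (oddPart φ hpar) := by
  intro i j k l h1 h2 h3 hik hjl
  rw [sameBlock_oddPart hpar] at hik hjl ⊢
  exact hNC _ _ _ _ (oddEmb_lt_iff.2 h1) (oddEmb_lt_iff.2 h2) (oddEmb_lt_iff.2 h3) hik hjl

lemma oddEven_join (hpar : ParityPreserving φ) :
    IsOddEvenJoin (oddPart φ hpar) (evenPart φ hpar) φ := by
  rw [IsOddEvenJoin, oddPart_parts, evenPart_parts, Finset.image_image, Finset.image_image]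
  apply Finset.ext
  intro B
  rw [Finset.mem_union, Finset.mem_image, Finset.mem_image]
  constructor
  · intro hB
    rcases hpar B hB with h | h
    · exact Or.inl ⟨B, Finset.mem_filter.2 ⟨hB, h⟩, image_oddEmb_half h⟩
    · exact Or.inr ⟨B, Finset.mem_filter.2 ⟨hB, h⟩, image_evenEmb_half h⟩
  · rintro (⟨C, hC, rfl⟩ | ⟨C, hC, rfl⟩)
    · rw [Finset.mem_filter] at hC
      show (C.image half).image oddEmb ∈ φ.parts
      rw [image_oddEmb_half hC.2]
      exact hC.1
    · rw [Finset.mem_filter] at hC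
      show (C.image half).image evenEmb ∈ φ.parts
      rw [image_evenEmb_half hC.2]
      exact hC.1

end OddEven

/-! ### transfer of min/max along the embeddings -/

section Transfer

variable {n : ℕ}

lemma isMinOf_image_half_odd {B : Finset (Fin (2*n))} (hB : OddBlock B) {a : Fin n} :
    IsMinOf a (B.image half) ↔ IsMinOf (oddEmb a) B := by
  constructor
  · rintro ⟨hmem, hle⟩
    rw [mem_image_half_iff_odd hB] at hmem
    refine ⟨hmem, fun x hx => ?_⟩
    have := hle (half x) (Finset.mem_image_of_mem half hx)
    have hx2 := hB x hx
    have hv : a.val ≤ x.val / 2 := this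
    show 2 * a.val ≤ x.val
    omega
  · rintro ⟨hmem, hle⟩
    refine ⟨(mem_image_half_iff_odd hB).2 hmem, fun y hy => ?_⟩
    obtain ⟨x, hx, rfl⟩ := Finset.mem_image.1 hy
    have := hle x hx
    have hv : 2 * a.val ≤ x.val := this
    show a.val ≤ x.val / 2
    omega

lemma isMaxOf_image_half_odd {B : Finset (Fin (2*n))} (hB : OddBlock B) {a : Fin n} :
    IsMaxOf a (B.image half) ↔ IsMaxOf (oddEmb a) B := by
  constructor
  · rintro ⟨hmem, hle⟩
    rw [mem_image_half_iff_odd hB] at hmem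
    refine ⟨hmem, fun x hx => ?_⟩
    have := hle (half x) (Finset.mem_image_of_mem half hx)
    have hx2 := hB x hx
    have hv : x.val / 2 ≤ a.val := this
    show x.val ≤ 2 * a.val
    omega
  · rintro ⟨hmem, hle⟩
    refine ⟨(mem_image_half_iff_odd hB).2 hmem, fun y hy => ?_⟩
    obtain ⟨x, hx, rfl⟩ := Finset.mem_image.1 hy
    have := hle x hx
    have hv : x.val ≤ 2 * a.val := this
    show x.val / 2 ≤ a.val
    omega

lemma isMinOf_image_half_even {B : Finset (Fin (2*n))} (hB : EvenBlock B) {a : Fin n} :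
    IsMinOf a (B.image half) ↔ IsMinOf (evenEmb a) B := by
  constructor
  · rintro ⟨hmem, hle⟩
    rw [mem_image_half_iff_even hB] at hmem
    refine ⟨hmem, fun x hx => ?_⟩
    have := hle (half x) (Finset.mem_image_of_mem half hx)
    have hx2 := hB x hx
    have hv : a.val ≤ x.val / 2 := this
    show 2 * a.val + 1 ≤ x.val
    omega
  · rintro ⟨hmem, hle⟩
    refine ⟨(mem_image_half_iff_even hB).2 hmem, fun y hy => ?_⟩
    obtain ⟨x, hx, rfl⟩ := Finset.mem_image.1 hy
    have := hle x hx
    have hv : 2 * a.val + 1 ≤ x.val := this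
    show a.val ≤ x.val / 2
    omega

lemma isMaxOf_image_half_even {B : Finset (Fin (2*n))} (hB : EvenBlock B) {a : Fin n} :
    IsMaxOf a (B.image half) ↔ IsMaxOf (evenEmb a) B := by
  constructor
  · rintro ⟨hmem, hle⟩
    rw [mem_image_half_iff_even hB] at hmem
    refine ⟨hmem, fun x hx => ?_⟩
    have := hle (half x) (Finset.mem_image_of_mem half hx)
    have hx2 := hB x hx
    have hv : x.val / 2 ≤ a.val := this
    show x.val ≤ 2 * a.val + 1
    omega
  · rintro ⟨hmem, hle⟩
    refine ⟨(mem_image_half_iff_even hB).2 hmem, fun y hy => ?_⟩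
    obtain ⟨x, hx, rfl⟩ := Finset.mem_image.1 hy
    have := hle x hx
    have hv : x.val ≤ 2 * a.val + 1 := this
    show x.val / 2 ≤ a.val
    omega

lemma isMinOf_image_oddEmb {W : Finset (Fin n)} {a : Fin n} :
    IsMinOf (oddEmb a) (W.image oddEmb) ↔ IsMinOf a W := by
  constructor
  · rintro ⟨hmem, hle⟩
    obtain ⟨x, hx, hxe⟩ := Finset.mem_image.1 hmem
    have hax : a = x := by
      have : (oddEmb x).val = (oddEmb a).val := by rw [hxe]
      have h2 : 2 * x.val = 2 * a.val := this
      exact Fin.ext (by omega)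
    refine ⟨hax ▸ hx, fun y hy => ?_⟩
    have := hle (oddEmb y) (Finset.mem_image_of_mem _ hy)
    have hv : 2 * a.val ≤ 2 * y.val := this
    show a.val ≤ y.val
    omega
  · rintro ⟨hmem, hle⟩
    refine ⟨Finset.mem_image_of_mem _ hmem, fun y hy => ?_⟩
    obtain ⟨x, hx, rfl⟩ := Finset.mem_image.1 hy
    have := hle x hx
    have hv : a.val ≤ x.val := this
    show 2 * a.val ≤ 2 * x.val
    omega

lemma isMaxOf_image_oddEmb {W : Finset (Fin n)} {a : Fin n} :
    IsMaxOf (oddEmb a) (W.image oddEmb) ↔ IsMaxOf a W := by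
  constructor
  · rintro ⟨hmem, hle⟩
    obtain ⟨x, hx, hxe⟩ := Finset.mem_image.1 hmem
    have hax : a = x := by
      have : (oddEmb x).val = (oddEmb a).val := by rw [hxe]
      have h2 : 2 * x.val = 2 * a.val := this
      exact Fin.ext (by omega)
    refine ⟨hax ▸ hx, fun y hy => ?_⟩
    have := hle (oddEmb y) (Finset.mem_image_of_mem _ hy)
    have hv : 2 * y.val ≤ 2 * a.val := this
    show y.val ≤ a.val
    omega
  · rintro ⟨hmem, hle⟩
    refine ⟨Finset.mem_image_of_mem _ hmem, fun y hy => ?_⟩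
    obtain ⟨x, hx, rfl⟩ := Finset.mem_image.1 hy
    have := hle x hx
    have hv : x.val ≤ a.val := this
    show 2 * x.val ≤ 2 * a.val
    omega

lemma isMinOf_image_evenEmb {W : Finset (Fin n)} {a : Fin n} :
    IsMinOf (evenEmb a) (W.image evenEmb) ↔ IsMinOf a W := by
  constructor
  · rintro ⟨hmem, hle⟩
    obtain ⟨x, hx, hxe⟩ := Finset.mem_image.1 hmem
    have hax : a = x := by
      have : (evenEmb x).val = (evenEmb a).val := by rw [hxe]
      have h2 : 2 * x.val + 1 = 2 * a.val + 1 := this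
      exact Fin.ext (by omega)
    refine ⟨hax ▸ hx, fun y hy => ?_⟩
    have := hle (evenEmb y) (Finset.mem_image_of_mem _ hy)
    have hv : 2 * a.val + 1 ≤ 2 * y.val + 1 := this
    show a.val ≤ y.val
    omega
  · rintro ⟨hmem, hle⟩
    refine ⟨Finset.mem_image_of_mem _ hmem, fun y hy => ?_⟩
    obtain ⟨x, hx, rfl⟩ := Finset.mem_image.1 hy
    have := hle x hx
    have hv : a.val ≤ x.val := this
    show 2 * a.val + 1 ≤ 2 * x.val + 1
    omega

lemma isMaxOf_image_evenEmb {W : Finset (Fin n)} {a : Fin n} :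
    IsMaxOf (evenEmb a) (W.image evenEmb) ↔ IsMaxOf a W := by
  constructor
  · rintro ⟨hmem, hle⟩
    obtain ⟨x, hx, hxe⟩ := Finset.mem_image.1 hmem
    have hax : a = x := by
      have : (evenEmb x).val = (evenEmb a).val := by rw [hxe]
      have h2 : 2 * x.val + 1 = 2 * a.val + 1 := this
      exact Fin.ext (by omega)
    refine ⟨hax ▸ hx, fun y hy => ?_⟩
    have := hle (evenEmb y) (Finset.mem_image_of_mem _ hy)
    have hv : 2 * y.val + 1 ≤ 2 * a.val + 1 := this
    show y.val ≤ a.val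
    omega
  · rintro ⟨hmem, hle⟩
    refine ⟨Finset.mem_image_of_mem _ hmem, fun y hy => ?_⟩
    obtain ⟨x, hx, rfl⟩ := Finset.mem_image.1 hy
    have := hle x hx
    have hv : x.val ≤ a.val := this
    show 2 * x.val + 1 ≤ 2 * a.val + 1
    omega

lemma finRotate_val (hn : 0 < n) (b : Fin n) :
    ((finRotate n) b).val = if b.val = n - 1 then 0 else b.val + 1 := by
  obtain ⟨n', rfl⟩ : ∃ n', n = n' + 1 := ⟨n - 1, by omega⟩
  rw [finRotate_succ_apply]
  by_cases h : b.val = n'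
  · have : b = Fin.last n' := Fin.ext (by simpa using h)
    rw [this]
    simp
  · rw [Fin.val_add_one_of_lt (by
      have := b.isLt
      exact Fin.lt_last_iff_ne_last.2 (fun hh => h (by rw [hh]; rfl)))]
    simp only [Nat.add_sub_cancel]
    rw [if_neg h]

end Transfer

/-! ### the key lemma: the even part of the closed partition is the Kreweras
complement of its odd part -/

section Crux

variable {n : ℕ}

lemma crux (hn : 0 < n) {φ : FP (2*n)} (hNC : IsNC φ) (hpar : ParityPreserving φ)
    (h2 : ExactlyTwoOuterBlocks φ) (hnm : ¬ MergeCond φ) :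
    IsAssocPerm (evenPart φ hpar) ((assocPerm (oddPart φ hpar))⁻¹ * finRotate n) := by
  have hm : 0 < 2*n := by omega
  have heven : (2*n) % 2 = 0 := by omega
  intro W hW b hb
  have hWblk : blk (evenPart φ hpar) b = W := blk_eq_of_mem hW hb
  have hWimg : W = (blk φ (evenEmb b)).image half := by rw [← hWblk, blk_evenPart]
  set E := blk φ (evenEmb b) with hEdef
  have hEmem : E ∈ φ.parts := blk_mem φ _
  have hEeven : EvenBlock E := blk_even hpar b
  have happly : ((assocPerm (oddPart φ hpar))⁻¹ * finRotate n) b =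
      (assocPerm (oddPart φ hpar))⁻¹ (finRotate n b) := rfl
  by_cases hblast : b.val = n - 1
  · -- wrap-around case
    have hrotv : (finRotate n b).val = 0 := by rw [finRotate_val hn, if_pos hblast]
    have hrot : finRotate n b = ⟨0, hn⟩ := Fin.ext hrotv
    set z : Fin n := ⟨0, hn⟩ with hzdef
    have hzodd : oddEmb z = (⟨0, hm⟩ : Fin (2*n)) := Fin.ext (by simp [hzdef])
    set M := blk φ (oddEmb z) with hMdef
    have hModd : OddBlock M := blk_odd hpar z
    have hMne : M.Nonempty := parts_nonempty (blk_mem φ _)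
    set V := blk (oddPart φ hpar) z with hVdef
    have hVimg : V = M.image half := by rw [hVdef, blk_oddPart]
    have hVne : V.Nonempty := parts_nonempty (blk_mem _ _)
    set aM := V.max' hVne with haMdef
    have hinv : (assocPerm (oddPart φ hpar))⁻¹ (finRotate n b) = aM := by
      rw [hrot]
      exact assocPerm_inv_min (blk_mem _ _)
        ⟨mem_blk _ _, fun y _ => Fin.le_def.2 (Nat.zero_le _)⟩ (isMaxOf_max' hVne)
    have hmaxM : IsMaxOf (oddEmb aM) M := by
      rw [← isMaxOf_image_half_odd hModd, ← hVimg]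
      exact isMaxOf_max' hVne
    have hNeq : E = blk φ ⟨2*n-1, by omega⟩ := by
      have : evenEmb b = (⟨2*n-1, by omega⟩ : Fin (2*n)) := Fin.ext (by simp; omega)
      rw [hEdef, this]
    have hadj := maxM_succ_eq_minN hNC hpar h2 hm heven
    have hNne : (blk φ (⟨2*n-1, by omega⟩ : Fin (2*n))).Nonempty :=
      parts_nonempty (blk_mem φ _)
    -- max' M = oddEmb aM
    have hmaxM' : (M.max' hMne) = oddEmb aM := by
      rw [isMaxOf_iff hMne] at hmaxM
      exact hmaxM.symm
    have hminN : ((blk φ (⟨2*n-1, by omega⟩ : Fin (2*n))).min' hNne).val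
        = 2 * aM.val + 1 := by
      have e1 : ((blk φ (⟨0, hm⟩ : Fin (2*n))).max'
          (parts_nonempty (blk_mem φ _))).val = 2 * aM.val := by
        have : blk φ (⟨0, hm⟩ : Fin (2*n)) = M := by rw [hMdef, hzodd]
        rw [show ((blk φ (⟨0, hm⟩ : Fin (2*n))).max' (parts_nonempty (blk_mem φ _)))
          = M.max' hMne by congr 1]
        rw [hmaxM']
        rfl
      omega
    have haMW : evenEmb aM ∈ E := by
      rw [hNeq]
      have : evenEmb aM = (blk φ (⟨2*n-1, by omega⟩ : Fin (2*n))).min' hNne :=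
        Fin.ext (by rw [hminN]; rfl)
      rw [this]
      exact Finset.min'_mem _ _
    constructor
    · rw [happly, hinv, hWimg]
      exact (mem_image_half_iff_even hEeven).2 haMW
    · right
      constructor
      · rw [hWimg, isMaxOf_image_half_even hEeven]
        refine ⟨mem_blk φ _, fun y hy => ?_⟩
        show y.val ≤ (evenEmb b).val
        have := y.isLt
        simp only [evenEmb_val]
        omega
      · rw [happly, hinv, hWimg, isMinOf_image_half_even hEeven]
        refine ⟨haMW, fun y hy => ?_⟩
        show (evenEmb aM).val ≤ y.val
        have : ((blk φ (⟨2*n-1, by omega⟩ : Fin (2*n))).min' hNne).val ≤ y.val :=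
          Finset.min'_le _ y (hNeq ▸ hy)
        simp only [evenEmb_val]
        omega
  · -- main case : b.val + 1 < n
    have hbn : b.val + 1 < n := by have := b.isLt; omega
    have hrotv : (finRotate n b).val = b.val + 1 := by
      rw [finRotate_val hn, if_neg hblast]
    set c : Fin n := ⟨b.val + 1, hbn⟩ with hcdef
    have hrot : finRotate n b = c := Fin.ext hrotv
    set O := blk φ (oddEmb c) with hOdef
    have hOodd : OddBlock O := blk_odd hpar c
    have hOmem : O ∈ φ.parts := blk_mem φ _
    have hOne : O.Nonempty := parts_nonempty hOmem
    have hVimg : blk (oddPart φ hpar) c = O.image half := blk_oddPart hpar c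
    by_cases hF : (O.filter (fun x => x < oddEmb c)).Nonempty
    · -- (i) : oddEmb c has a predecessor p in O
      set p := (O.filter (fun x => x < oddEmb c)).max' hF with hpdef
      have hpmemf := Finset.max'_mem _ hF
      rw [Finset.mem_filter] at hpmemf
      obtain ⟨hpO, hplt⟩ := hpmemf
      have hppar : p.val % 2 = 0 := hOodd p hpO
      set a := half p with hadef
      have hpa : oddEmb a = p := oddEmb_half hppar
      have hac : a.val < c.val := by
        have h1 : p.val < 2 * c.val := hplt
        simp only [hadef, half_val]
        omega
      have hcons : ∀ w ∈ O, ¬(p < w ∧ w < oddEmb c) := by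
        rintro w hw ⟨hw1, hw2⟩
        have := Finset.le_max' (O.filter (fun x => x < oddEmb c)) w
          (Finset.mem_filter.2 ⟨hw, hw2⟩)
        exact absurd hw1 (not_lt_of_ge this)
      have hinv : (assocPerm (oddPart φ hpar))⁻¹ (finRotate n b) = a := by
        rw [hrot]
        apply assocPerm_inv_prev (blk_mem (oddPart φ hpar) c) (mem_blk _ _)
        · rw [hVimg, mem_image_half_iff_odd hOodd, hpa]
          exact hpO
        · exact hac
        · rintro x hx ⟨hx1, hx2⟩
          rw [hVimg, mem_image_half_iff_odd hOodd] at hx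
          have hv1 : a.val < x.val := hx1
          have hv2 : x.val < c.val := hx2
          refine hcons (oddEmb x) hx ⟨?_, ?_⟩
          · show p.val < 2 * x.val
            have : p.val = 2 * a.val := by rw [← hpa]; rfl
            omega
          · show 2 * x.val < 2 * c.val
            omega
      obtain ⟨E', hE'top, hE'span⟩ := gap_main hNC hpar hnm hOmem hpO (mem_blk φ _)
        hcons (by
          show p.val + 1 < 2 * c.val
          have : p.val = 2 * a.val := by rw [← hpa]; rfl
          simp only [hcdef] at hac ⊢
          omega)
      have hE'ne : E'.Nonempty := parts_nonempty hE'top.1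
      obtain ⟨hminE', hmaxE'⟩ := hE'span hE'ne
      have hmaxE'b : E'.max' hE'ne = evenEmb b := Fin.ext (by
        rw [hmaxE']
        show 2 * c.val - 1 = 2 * b.val + 1
        simp only [hcdef]
        omega)
      have hEE' : E = E' := blk_eq_of_mem hE'top.1
        (show evenEmb b ∈ E' by rw [← hmaxE'b]; exact E'.max'_mem hE'ne)
      have hminE'a : E'.min' hE'ne = evenEmb a := Fin.ext (by
        rw [hminE']
        show p.val + 1 = 2 * a.val + 1
        rw [← hpa]
        rfl)
      have haE : evenEmb a ∈ E := by
        rw [hEE', ← hminE'a]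
        exact E'.min'_mem hE'ne
      constructor
      · rw [happly, hinv, hWimg]
        exact (mem_image_half_iff_even hEeven).2 haE
      · right
        constructor
        · rw [hWimg, isMaxOf_image_half_even hEeven]
          refine ⟨mem_blk φ _, fun y hy => ?_⟩
          rw [hEE'] at hy
          have := E'.le_max' y hy
          rw [hmaxE'b] at this
          exact this
        · rw [happly, hinv, hWimg, isMinOf_image_half_even hEeven]
          refine ⟨haE, fun y hy => ?_⟩
          rw [hEE'] at hy
          have := E'.min'_le y hy
          rw [hminE'a] at this
          exact this
    · -- (ii) : oddEmb c is the minimum of O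
      have hminO : ∀ x ∈ O, oddEmb c ≤ x := by
        intro x hx
        by_contra hlt
        push_neg at hlt
        exact hF ⟨x, Finset.mem_filter.2 ⟨hx, hlt⟩⟩
      set aO := O.max' hOne with haOdef
      have haOpar : aO.val % 2 = 0 := hOodd _ (O.max'_mem hOne)
      set a := half aO with hadef
      have hpa : oddEmb a = aO := oddEmb_half haOpar
      have hinv : (assocPerm (oddPart φ hpar))⁻¹ (finRotate n b) = a := by
        rw [hrot]
        apply assocPerm_inv_min (blk_mem (oddPart φ hpar) c)
        · rw [hVimg, isMinOf_image_half_odd hOodd]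
          exact ⟨mem_blk φ _, hminO⟩
        · rw [hVimg, isMaxOf_image_half_odd hOodd, hpa]
          exact isMaxOf_max' hOne
      -- O is not an outer block
      have hO0 : O ≠ blk φ ⟨0, hm⟩ := by
        intro h
        have h0 : (⟨0, hm⟩ : Fin (2*n)) ∈ O := h ▸ mem_blk φ _
        have := hminO _ h0
        have hv : 2 * c.val ≤ 0 := this
        simp only [hcdef] at hv
        omega
      have hOlast : O ≠ blk φ ⟨2*n-1, by omega⟩ := by
        intro h
        have h0 : (⟨2*n-1, by omega⟩ : Fin (2*n)) ∈ O := by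
          have hmb := mem_blk φ (⟨2*n-1, by omega⟩ : Fin (2*n))
          rwa [← h] at hmb
        have := hOodd _ h0
        simp only [Fin.val_mk] at this
        omega
      obtain ⟨hPmem, hPemb, hPprop⟩ := parent_spec hNC hOmem
        (nonouter_parent hpar h2 hm heven hOmem hO0 hOlast)
      set P := parentOf φ O with hPdef
      obtain ⟨hPne, hOne', hs1, hs2⟩ := hPemb
      have hPO : P ≠ O := sEmb_ne ⟨hPne, hOne', hs1, hs2⟩
      -- p₁ : the largest element of P below min' O ; p₂ : smallest above max' O
      have hf1 : (P.filter (fun x => x < O.min' hOne')).Nonempty :=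
        ⟨P.min' hPne, Finset.mem_filter.2 ⟨P.min'_mem hPne, hs1⟩⟩
      have hf2 : (P.filter (fun x => O.max' hOne' < x)).Nonempty :=
        ⟨P.max' hPne, Finset.mem_filter.2 ⟨P.max'_mem hPne, hs2⟩⟩
      set p₁ := (P.filter (fun x => x < O.min' hOne')).max' hf1 with hp₁def
      set p₂ := (P.filter (fun x => O.max' hOne' < x)).min' hf2 with hp₂def
      have hp₁mem := Finset.max'_mem _ hf1
      have hp₂mem := Finset.min'_mem _ hf2
      rw [Finset.mem_filter] at hp₁mem hp₂mem
      obtain ⟨hp₁P, hp₁lt⟩ := hp₁mem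
      obtain ⟨hp₂P, hp₂gt⟩ := hp₂mem
      have hconsP : ∀ w ∈ P, ¬(p₁ < w ∧ w < p₂) := by
        rintro w hw ⟨hw1, hw2⟩
        rcases lt_trichotomy w (O.min' hOne') with h | h | h
        · exact absurd hw1 (not_lt_of_ge (Finset.le_max'
            (P.filter (fun x => x < O.min' hOne')) w (Finset.mem_filter.2 ⟨hw, h⟩)))
        · exact hPO (φ.eq_of_mem_parts hPmem hOmem (h ▸ hw) (O.min'_mem hOne'))
        rcases lt_trichotomy w (O.max' hOne') with h' | h' | h'
        · -- w strictly inside the span of O : nest gives a contradiction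
          have hnest := nest hNC hPmem hOmem hPO hOne' hw h h'
          obtain ⟨hcon, -⟩ := hnest (P.min' hPne) (P.min'_mem hPne)
          exact absurd hs1 (not_lt_of_gt hcon)
        · exact hPO (φ.eq_of_mem_parts hPmem hOmem (h' ▸ hw) (O.max'_mem hOne'))
        · exact absurd hw2 (not_lt_of_ge (Finset.min'_le
            (P.filter (fun x => O.max' hOne' < x)) w (Finset.mem_filter.2 ⟨hw, h'⟩)))
      have hOtop : IsTop φ P p₁ p₂ O := by
        refine ⟨hOmem, fun x hx => ⟨?_, ?_⟩, hPdef.symm⟩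
        · exact lt_of_lt_of_le hp₁lt (O.min'_le x hx)
        · exact lt_of_le_of_lt (O.le_max' x hx) hp₂gt
      have hminO' := top_min hNC hpar hnm hPmem hp₁P hp₂P hconsP hOtop hOne'
      have hmaxO' := top_max hNC hpar hnm hPmem hp₁P hp₂P hconsP hOtop hOne'
      -- p₁ = evenEmb b and p₂ = evenEmb a
      have hminOv : (O.min' hOne').val = 2 * c.val := by
        have he : O.min' hOne' = oddEmb c := ((isMinOf_iff hOne').1 ⟨mem_blk φ _, hminO⟩).symm
        rw [he]; rfl
      have hmaxOv : (O.max' hOne').val = 2 * a.val := by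
        show aO.val = 2 * a.val
        rw [← hpa]; rfl
      have hp₁v : p₁.val = 2 * b.val + 1 := by
        simp only [hcdef] at hminOv
        omega
      have hp₂v : p₂.val = 2 * a.val + 1 := by omega
      have hp₁E : p₁ = evenEmb b := Fin.ext (by rw [hp₁v]; rfl)
      have hp₂E : p₂ = evenEmb a := Fin.ext (by rw [hp₂v]; rfl)
      have hEP : E = P := blk_eq_of_mem hPmem (by rw [← hp₁E]; exact hp₁P)
      have haE : evenEmb a ∈ E := by rw [hEP, ← hp₂E]; exact hp₂P
      have hba : b.val < a.val := by
        have := O.min'_le _ (O.max'_mem hOne')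
        have hv : (O.min' hOne').val ≤ (O.max' hOne').val := this
        simp only [hcdef] at hminOv
        omega
      constructor
      · rw [happly, hinv, hWimg]
        exact (mem_image_half_iff_even hEeven).2 haE
      · left
        rw [happly, hinv]
        constructor
        · exact hba
        · intro x hx hbx
          rw [hWimg, mem_image_half_iff_even hEeven] at hx
          rw [hEP] at hx
          have hxgt : p₁ < evenEmb x := by
            show p₁.val < 2 * x.val + 1
            have : b.val < x.val := hbx
            omega
          have := hconsP (evenEmb x) hx
          push_neg at this
          have hge := this hxgt
          have hv : p₂.val ≤ 2 * x.val + 1 := hge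
          show a.val ≤ x.val
          omega
  done

end Crux

/-! ### uniqueness : consequences of the Kreweras pair relations -/

section Unique1

variable {n : ℕ} {π' κ' : FP n} {σπ' σκ' : Equiv.Perm (Fin n)}

lemma isMinOf_unique {B : Finset (Fin n)} {x y : Fin n} (hx : IsMinOf x B)
    (hy : IsMinOf y B) : x = y :=
  le_antisymm (hx.2 y hy.1) (hy.2 x hx.1)

lemma isMaxOf_unique {B : Finset (Fin n)} {x y : Fin n} (hx : IsMaxOf x B)
    (hy : IsMaxOf y B) : x = y :=
  le_antisymm (hy.2 x hx.1) (hx.2 y hy.1)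

lemma assoc_next {ρ : FP n} {σ : Equiv.Perm (Fin n)} (h : IsAssocPerm ρ σ)
    {V : Finset (Fin n)} (hV : V ∈ ρ.parts) {u v : Fin n} (hu : u ∈ V) (hv : v ∈ V)
    (huv : u < v) (hcons : ∀ x ∈ V, ¬(u < x ∧ x < v)) : σ u = v := by
  obtain ⟨hmem, hcase⟩ := h V hV u hu
  rcases hcase with ⟨h1, h2⟩ | ⟨h1, -⟩
  · have hle : σ u ≤ v := h2 v hv huv
    rcases eq_or_lt_of_le hle with heq | hlt
    · exact heq
    · exact absurd ⟨h1, hlt⟩ (hcons (σ u) hmem)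
  · exact absurd (h1.2 v hv) (not_le_of_gt huv)

lemma assoc_wrap {ρ : FP n} {σ : Equiv.Perm (Fin n)} (h : IsAssocPerm ρ σ)
    {V : Finset (Fin n)} (hV : V ∈ ρ.parts) {u v : Fin n} (hmax : IsMaxOf u V)
    (hmin : IsMinOf v V) : σ u = v := by
  obtain ⟨hmem, hcase⟩ := h V hV u hmax.1
  rcases hcase with ⟨h1, -⟩ | ⟨-, h2⟩
  · exact absurd (hmax.2 (σ u) hmem) (not_le_of_gt h1)
  · exact isMinOf_unique h2 hmin

lemma rel_apply (hrel : σκ' = σπ'⁻¹ * finRotate n) (x : Fin n) :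
    σκ' x = σπ'⁻¹ (finRotate n x) := by rw [hrel]; rfl

/-- E1: if `u < v` are consecutive in a `π'`-block, then the `κ'`-block of `v-1`
has minimum `u` and maximum `v-1`. -/
lemma E1 (hn : 0 < n) (hAπ : IsAssocPerm π' σπ') (hAκ : IsAssocPerm κ' σκ')
    (hrel : σκ' = σπ'⁻¹ * finRotate n)
    {V : Finset (Fin n)} (hV : V ∈ π'.parts) {u v : Fin n} (hu : u ∈ V) (hv : v ∈ V)
    (huv : u < v) (hcons : ∀ x ∈ V, ¬(u < x ∧ x < v)) :
    ∃ W ∈ κ'.parts, ∃ (d : Fin n), d.val = v.val - 1 ∧ IsMinOf u W ∧ IsMaxOf d W := by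
  have hnext : σπ' u = v := assoc_next hAπ hV hu hv huv hcons
  have hvpos : 0 < v.val := lt_of_le_of_lt (Nat.zero_le _) huv
  set d : Fin n := ⟨v.val - 1, by have := v.isLt; omega⟩ with hddef
  have hrotd : finRotate n d = v := by
    apply Fin.ext
    rw [finRotate_val hn]
    have : d.val = v.val - 1 := rfl
    rw [if_neg (by have := v.isLt; omega)]
    omega
  have hκd : σκ' d = u := by
    rw [rel_apply hrel, hrotd, ← hnext]
    exact Equiv.symm_apply_apply _ _
  obtain ⟨hmem, hcase⟩ := hAκ (blk κ' d) (blk_mem κ' d) d (mem_blk κ' d)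
  rw [hκd] at hmem hcase
  rcases hcase with ⟨h1, -⟩ | ⟨h1, h2⟩
  · exfalso
    have c1 : d.val < u.val := h1
    have c2 : u.val < v.val := huv
    have : d.val = v.val - 1 := rfl
    omega
  · exact ⟨blk κ' d, blk_mem κ' d, d, rfl, h2, h1⟩

/-- dual E1: if `u < v` are consecutive in a `κ'`-block, then the `π'`-block of `v`
has minimum `u+1` and maximum `v`. -/
lemma E1' (hn : 0 < n) (hAπ : IsAssocPerm π' σπ') (hAκ : IsAssocPerm κ' σκ')
    (hrel : σκ' = σπ'⁻¹ * finRotate n)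
    {W : Finset (Fin n)} (hW : W ∈ κ'.parts) {u v : Fin n} (hu : u ∈ W) (hv : v ∈ W)
    (huv : u < v) (hcons : ∀ x ∈ W, ¬(u < x ∧ x < v)) :
    ∃ V ∈ π'.parts, ∃ (s : Fin n), s.val = u.val + 1 ∧ IsMinOf s V ∧ IsMaxOf v V := by
  have hnext : σκ' u = v := assoc_next hAκ hW hu hv huv hcons
  set s : Fin n := ⟨u.val + 1, by have := v.isLt; have : u.val < v.val := huv; omega⟩
    with hsdef
  have hrotu : finRotate n u = s := by
    apply Fin.ext
    rw [finRotate_val hn]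
    rw [if_neg (by have := v.isLt; have : u.val < v.val := huv; omega)]
  have hπv : σπ' v = s := by
    rw [rel_apply hrel, hrotu] at hnext
    rw [← hnext]
    exact (Equiv.apply_symm_apply _ _)
  obtain ⟨hmem, hcase⟩ := hAπ (blk π' v) (blk_mem π' v) v (mem_blk π' v)
  rw [hπv] at hmem hcase
  rcases hcase with ⟨h1, -⟩ | ⟨h1, h2⟩
  · exfalso
    have c1 : v.val < s.val := h1
    have c2 : u.val < v.val := huv
    have : s.val = u.val + 1 := rfl
    omega
  · exact ⟨blk π' v, blk_mem π' v, s, rfl, h2, h1⟩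

/-- mixed non-crossing: a π'-pair cannot cross a κ'-pair (pattern odd<even<odd<even). -/
lemma pattern1 (hn : 0 < n) (hNCπ : IsNC π') (hAπ : IsAssocPerm π' σπ')
    (hAκ : IsAssocPerm κ' σκ') (hrel : σκ' = σπ'⁻¹ * finRotate n)
    {V W : Finset (Fin n)} (hV : V ∈ π'.parts) (hW : W ∈ κ'.parts)
    {a c b d : Fin n} (haV : a ∈ V) (hcV : c ∈ V) (hbW : b ∈ W) (hdW : d ∈ W)
    (h1 : a ≤ b) (h2 : b < c) (h3 : c ≤ d) : False := by
  have hfil : (W.filter (fun x => x < c)).Nonempty := ⟨b, Finset.mem_filter.2 ⟨hbW, h2⟩⟩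
  set t := (W.filter (fun x => x < c)).max' hfil with htdef
  have htmem := Finset.max'_mem _ hfil
  rw [Finset.mem_filter] at htmem
  obtain ⟨htW, htc⟩ := htmem
  have hbt : b ≤ t := Finset.le_max' (W.filter (fun x => x < c)) b
    (Finset.mem_filter.2 ⟨hbW, h2⟩)
  -- t is not the maximum of W
  obtain ⟨hmem, hcase⟩ := hAκ W hW t htW
  rcases hcase with ⟨ht1, ht2⟩ | ⟨ht1, -⟩
  swap
  · exact absurd (ht1.2 d hdW) (not_le_of_gt (lt_of_lt_of_le htc h3))
  set r := σκ' t with hrdef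
  have hrc : c ≤ r := by
    by_contra hlt
    push_neg at hlt
    have := Finset.le_max' (W.filter (fun x => x < c)) r (Finset.mem_filter.2 ⟨hmem, hlt⟩)
    exact absurd ht1 (not_lt_of_ge this)
  -- σπ' r = t + 1
  set s : Fin n := ⟨t.val + 1, by have := c.isLt; have : t.val < c.val := htc; omega⟩
    with hsdef
  have hrott : finRotate n t = s := by
    apply Fin.ext
    rw [finRotate_val hn]
    rw [if_neg (by have := c.isLt; have : t.val < c.val := htc; omega)]
  have hπr : σπ' r = s := by
    have : σκ' t = σπ'⁻¹ (finRotate n t) := rel_apply hrel t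
    rw [hrott] at this
    rw [hrdef, this]
    exact (Equiv.apply_symm_apply _ _)
  obtain ⟨hmemU, hcaseU⟩ := hAπ (blk π' r) (blk_mem π' r) r (mem_blk π' r)
  rw [hπr] at hmemU hcaseU
  have hsr : s.val ≤ r.val := by
    have hc1 : t.val < c.val := htc
    have hc2 : c.val ≤ r.val := hrc
    show t.val + 1 ≤ r.val
    omega
  rcases hcaseU with ⟨h1', -⟩ | ⟨hmaxU, hminU⟩
  · exact absurd hsr (not_le_of_gt h1')
  -- V meets the span [s, r] of U at c ; derive V = blk π' r and contradiction
  have has : a.val < s.val := by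
    have : a.val ≤ b.val := h1
    have : b.val ≤ t.val := hbt
    show a.val < t.val + 1
    omega
  have hVU : V = blk π' r := by
    by_cases hcU : c ∈ blk π' r
    · exact π'.eq_of_mem_parts hV (blk_mem π' r) hcV hcU
    · -- s < c < r, crossing
      have hsc : s < c := by
        have h1'' : s.val ≤ c.val := by
          have : t.val < c.val := htc
          show t.val + 1 ≤ c.val
          omega
        rcases eq_or_lt_of_le h1'' with heq | hlt
        · exact absurd (show c = s from Fin.ext heq.symm) (fun hh => hcU (hh ▸ hminU.1))
        · exact hlt
      have hcr : c < r := by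
        rcases eq_or_lt_of_le hrc with heq | hlt
        · exact absurd (show c = r from heq) (fun hh => hcU (hh ▸ mem_blk π' r))
        · exact hlt
      have hcross := hNCπ a s c r (by exact_mod_cast has) hsc hcr
        ⟨V, hV, haV, hcV⟩ ⟨blk π' r, blk_mem π' r, hminU.1, mem_blk π' r⟩
      obtain ⟨X, hX, haX, hsX⟩ := hcross
      have e1 : X = V := π'.eq_of_mem_parts hX hV haX haV
      have e2 : X = blk π' r := π'.eq_of_mem_parts hX (blk_mem π' r) hsX hminU.1
      exact e1 ▸ e2
  -- now a ∈ V = U but a < s = min U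
  rw [hVU] at haV
  exact absurd (hminU.2 a haV) (not_le_of_gt (by exact_mod_cast has))

/-- κ' is non-crossing. -/
lemma kappa_NC (hn : 0 < n) (hNCπ : IsNC π') (hAπ : IsAssocPerm π' σπ')
    (hAκ : IsAssocPerm κ' σκ') (hrel : σκ' = σπ'⁻¹ * finRotate n) : IsNC κ' := by
  intro i j k l h1 h2 h3 hik hjl
  obtain ⟨W₁, hW₁, hiW, hkW⟩ := hik
  obtain ⟨W₂, hW₂, hjW, hlW⟩ := hjl
  by_cases hWW : W₁ = W₂
  · exact ⟨W₁, hW₁, hiW, hWW ▸ hjW⟩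
  exfalso
  have hfil : (W₁.filter (fun x => x < j)).Nonempty := ⟨i, Finset.mem_filter.2 ⟨hiW, h1⟩⟩
  set t := (W₁.filter (fun x => x < j)).max' hfil with htdef
  have htmem := Finset.max'_mem _ hfil
  rw [Finset.mem_filter] at htmem
  obtain ⟨htW, htj⟩ := htmem
  obtain ⟨hmem, hcase⟩ := hAκ W₁ hW₁ t htW
  rcases hcase with ⟨ht1, ht2⟩ | ⟨ht1, -⟩
  swap
  · exact absurd (ht1.2 k hkW) (not_le_of_gt (lt_trans htj h2))
  set r := σκ' t with hrdef
  have hrj : j ≤ r := by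
    by_contra hlt
    push_neg at hlt
    have := Finset.le_max' (W₁.filter (fun x => x < j)) r (Finset.mem_filter.2 ⟨hmem, hlt⟩)
    exact absurd ht1 (not_lt_of_ge this)
  have hrj' : j < r := by
    rcases eq_or_lt_of_le hrj with heq | hlt
    · exact absurd (heq ▸ hjW : r ∈ W₂) (fun hh => hWW (κ'.eq_of_mem_parts hW₁ hW₂ hmem hh))
    · exact hlt
  have hrk : r ≤ k := ht2 k hkW (lt_trans htj h2)
  set s : Fin n := ⟨t.val + 1, by have := j.isLt; have : t.val < j.val := htj; omega⟩
    with hsdef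
  have hrott : finRotate n t = s := by
    apply Fin.ext
    rw [finRotate_val hn]
    rw [if_neg (by have := j.isLt; have : t.val < j.val := htj; omega)]
  have hπr : σπ' r = s := by
    have : σκ' t = σπ'⁻¹ (finRotate n t) := rel_apply hrel t
    rw [hrott] at this
    rw [hrdef, this]
    exact (Equiv.apply_symm_apply _ _)
  obtain ⟨hmemU, hcaseU⟩ := hAπ (blk π' r) (blk_mem π' r) r (mem_blk π' r)
  rw [hπr] at hmemU hcaseU
  have hsr : s.val ≤ r.val := by
    have hc1 : t.val < j.val := htj
    have hc2 : j.val < r.val := hrj'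
    show t.val + 1 ≤ r.val
    omega
  rcases hcaseU with ⟨h1', -⟩ | ⟨hmaxU, hminU⟩
  · exact absurd hsr (not_le_of_gt h1')
  -- apply pattern1 with U = blk π' r (containing s and r) against W₂ (containing j and l)
  exact pattern1 hn hNCπ hAπ hAκ hrel (blk_mem π' r) hW₂ hminU.1 (mem_blk π' r) hjW hlW
    (by
      show s.val ≤ j.val
      have : t.val < j.val := htj
      show t.val + 1 ≤ j.val
      omega)
    hrj' (le_of_lt (lt_of_le_of_lt hrk h3))

end Unique1

/-! ### uniqueness : the closure refines any valid decomposition -/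

section Unique2

variable {n : ℕ} {θ : FP (2*n)} {π' κ' : FP n} {σπ' σκ' : Equiv.Perm (Fin n)}
  {φ' : FP (2*n)}

lemma oddEmb_inj {a b : Fin n} (h : oddEmb a = oddEmb b) : a = b := by
  have h2 : (oddEmb a).val = (oddEmb b).val := by rw [h]
  simp only [oddEmb_val] at h2
  exact Fin.ext (by omega)

lemma evenEmb_inj {a b : Fin n} (h : evenEmb a = evenEmb b) : a = b := by
  have h2 : (evenEmb a).val = (evenEmb b).val := by rw [h]
  simp only [evenEmb_val] at h2
  exact Fin.ext (by omega)

lemma mem_image_oddEmb_iff {V : Finset (Fin n)} {a : Fin n} :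
    oddEmb a ∈ V.image oddEmb ↔ a ∈ V := by
  rw [Finset.mem_image]
  constructor
  · rintro ⟨x, hx, hxe⟩
    rwa [← oddEmb_inj hxe]
  · intro h; exact ⟨a, h, rfl⟩

lemma mem_image_evenEmb_iff {W : Finset (Fin n)} {a : Fin n} :
    evenEmb a ∈ W.image evenEmb ↔ a ∈ W := by
  rw [Finset.mem_image]
  constructor
  · rintro ⟨x, hx, hxe⟩
    rwa [← evenEmb_inj hxe]
  · intro h; exact ⟨a, h, rfl⟩

lemma join_block_odd (hjoin : IsOddEvenJoin π' κ' φ') {C : Finset (Fin (2*n))}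
    (hC : C ∈ φ'.parts) {x : Fin (2*n)} (hx : x ∈ C) (hp : x.val % 2 = 0) :
    ∃ V ∈ π'.parts, C = V.image oddEmb := by
  rw [IsOddEvenJoin] at hjoin
  rw [hjoin, Finset.mem_union, Finset.mem_image, Finset.mem_image] at hC
  rcases hC with ⟨V, hV, rfl⟩ | ⟨W, hW, rfl⟩
  · exact ⟨V, hV, rfl⟩
  · exfalso
    obtain ⟨w, -, rfl⟩ := Finset.mem_image.1 hx
    simp only [evenEmb_val] at hp
    omega

lemma join_block_even (hjoin : IsOddEvenJoin π' κ' φ') {C : Finset (Fin (2*n))}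
    (hC : C ∈ φ'.parts) {x : Fin (2*n)} (hx : x ∈ C) (hp : x.val % 2 = 1) :
    ∃ W ∈ κ'.parts, C = W.image evenEmb := by
  rw [IsOddEvenJoin] at hjoin
  rw [hjoin, Finset.mem_union, Finset.mem_image, Finset.mem_image] at hC
  rcases hC with ⟨V, hV, rfl⟩ | ⟨W, hW, rfl⟩
  · exfalso
    obtain ⟨w, -, rfl⟩ := Finset.mem_image.1 hx
    simp only [oddEmb_val] at hp
    omega
  · exact ⟨W, hW, rfl⟩

lemma oddEmb_image_mem (hjoin : IsOddEvenJoin π' κ' φ') {V : Finset (Fin n)}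
    (hV : V ∈ π'.parts) : V.image oddEmb ∈ φ'.parts := by
  rw [IsOddEvenJoin] at hjoin
  rw [hjoin, Finset.mem_union]
  exact Or.inl (Finset.mem_image_of_mem _ hV)

lemma evenEmb_image_mem (hjoin : IsOddEvenJoin π' κ' φ') {W : Finset (Fin n)}
    (hW : W ∈ κ'.parts) : W.image evenEmb ∈ φ'.parts := by
  rw [IsOddEvenJoin] at hjoin
  rw [hjoin, Finset.mem_union]
  exact Or.inr (Finset.mem_image_of_mem _ hW)

lemma step_refines (hn : 0 < n) (hNCπ : IsNC π') (hAπ : IsAssocPerm π' σπ')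
    (hAκ : IsAssocPerm κ' σκ') (hrel : σκ' = σπ'⁻¹ * finRotate n)
    (hjoin : IsOddEvenJoin π' κ' φ') (hLl : Ll θ φ')
    {ψ : FP (2*n)} {A P : Finset (Fin (2*n))} (hmp : MergePair ψ A P) (hG : Good θ ψ)
    (hPr : ∀ B ∈ ψ.parts, ∃ C ∈ φ'.parts, B ⊆ C) :
    ∀ B ∈ (mergeP ψ A P hmp.1 hmp.2.1 (sEmb_ne hmp.2.2.1)).parts,
      ∃ C ∈ φ'.parts, B ⊆ C := by
  intro B hB
  rw [mergeP_parts] at hB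
  rcases hB with rfl | ⟨hB, -, -⟩
  swap
  · exact hPr B hB
  obtain ⟨C_A, hC_A, hsubA⟩ := hPr A hmp.1
  obtain ⟨C_P, hC_P, hsubP⟩ := hPr P hmp.2.1
  suffices hCC : C_A = C_P by
    exact ⟨C_A, hC_A, Finset.union_subset hsubA (hCC ▸ hsubP)⟩
  by_contra hne
  obtain ⟨hPne, hAne, hs1, hs2⟩ := hmp.2.2.1
  have hprop := hmp.2.2.2.1
  have hminA := A.min'_mem hAne
  have hmaxA := A.max'_mem hAne
  have hminP := P.min'_mem hPne
  have hmaxP := P.max'_mem hPne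
  rcases hmp.2.2.2.2 with ⟨hoA, hoP⟩ | ⟨heA, heP⟩
  · -- odd case
    obtain ⟨V, hV, rfl⟩ := join_block_odd hjoin hC_A (hsubA hminA) (hoA _ hminA)
    obtain ⟨V', hV', rfl⟩ := join_block_odd hjoin hC_P (hsubP hminP) (hoP _ hminP)
    have hVV' : V ≠ V' := fun h => hne (by rw [h])
    set α := half (A.min' hAne) with hαdef
    set β := half (A.max' hAne) with hβdef
    have hαe : oddEmb α = A.min' hAne := oddEmb_half (hoA _ hminA)
    have hβe : oddEmb β = A.max' hAne := oddEmb_half (hoA _ hmaxA)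
    set u₀ := half (P.min' hPne) with hu₀def
    set q₀ := half (P.max' hPne) with hq₀def
    have hu₀e : oddEmb u₀ = P.min' hPne := oddEmb_half (hoP _ hminP)
    have hq₀e : oddEmb q₀ = P.max' hPne := oddEmb_half (hoP _ hmaxP)
    have hαV : α ∈ V := mem_image_oddEmb_iff.1 (by rw [hαe]; exact hsubA hminA)
    have hβV : β ∈ V := mem_image_oddEmb_iff.1 (by rw [hβe]; exact hsubA hmaxA)
    have hu₀V' : u₀ ∈ V' := mem_image_oddEmb_iff.1 (by rw [hu₀e]; exact hsubP hminP)
    have hq₀V' : q₀ ∈ V' := mem_image_oddEmb_iff.1 (by rw [hq₀e]; exact hsubP hmaxP)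
    have hu₀α : u₀ < α := by
      have h1 : (P.min' hPne).val < (A.min' hAne).val := hs1
      show u₀.val < α.val
      rw [← hαe, ← hu₀e] at h1
      simp only [oddEmb_val] at h1
      omega
    have hβq₀ : β < q₀ := by
      have h1 : (A.max' hAne).val < (P.max' hPne).val := hs2
      show β.val < q₀.val
      rw [← hβe, ← hq₀e] at h1
      simp only [oddEmb_val] at h1
      omega
    have hαβ : α ≤ β := by
      have := A.min'_le _ hmaxA
      have h1 : (A.min' hAne).val ≤ (A.max' hAne).val := this
      show α.val ≤ β.val
      rw [← hαe, ← hβe] at h1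
      simp only [oddEmb_val] at h1
      omega
    have hVmid : ∀ q ∈ V', ¬(α ≤ q ∧ q ≤ β) := by
      rintro q hq ⟨hq1, hq2⟩
      rcases eq_or_lt_of_le hq1 with heq | hlt1
      · exact hVV' (π'.eq_of_mem_parts hV hV' hαV (heq ▸ hq))
      rcases eq_or_lt_of_le hq2 with heq | hlt2
      · exact hVV' (π'.eq_of_mem_parts hV hV' hβV (heq ▸ hq))
      obtain ⟨X, hX, hX1, hX2⟩ := hNCπ u₀ α q β hu₀α hlt1 hlt2
        ⟨V', hV', hu₀V', hq⟩ ⟨V, hV, hαV, hβV⟩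
      exact hVV' ((π'.eq_of_mem_parts hX hV hX2 hαV) ▸ (π'.eq_of_mem_parts hX hV' hX1 hu₀V'))
    have hfu : (V'.filter (fun x => x < α)).Nonempty :=
      ⟨u₀, Finset.mem_filter.2 ⟨hu₀V', hu₀α⟩⟩
    have hfv : (V'.filter (fun x => β < x)).Nonempty :=
      ⟨q₀, Finset.mem_filter.2 ⟨hq₀V', hβq₀⟩⟩
    set u := (V'.filter (fun x => x < α)).max' hfu with hudef
    set v := (V'.filter (fun x => β < x)).min' hfv with hvdef
    have humem := Finset.max'_mem _ hfu
    have hvmem := Finset.min'_mem _ hfv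
    rw [Finset.mem_filter] at humem hvmem
    obtain ⟨huV', huα⟩ := humem
    obtain ⟨hvV', hvβ⟩ := hvmem
    have huv : u < v := lt_of_lt_of_le huα (le_trans hαβ (le_of_lt hvβ))
    have hcons : ∀ x ∈ V', ¬(u < x ∧ x < v) := by
      rintro x hx ⟨hx1, hx2⟩
      rcases lt_trichotomy x α with h | h | h
      · exact absurd hx1 (not_lt_of_ge (Finset.le_max'
          (V'.filter (fun y => y < α)) x (Finset.mem_filter.2 ⟨hx, h⟩)))
      · exact hVmid x hx ⟨le_of_eq h.symm, le_trans (le_of_eq h) hαβ⟩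
      rcases lt_trichotomy x β with h' | h' | h'
      · exact hVmid x hx ⟨le_of_lt h, le_of_lt h'⟩
      · exact hVmid x hx ⟨le_of_lt h, le_of_eq h'⟩
      · exact absurd hx2 (not_lt_of_ge (Finset.min'_le
          (V'.filter (fun y => β < y)) x (Finset.mem_filter.2 ⟨hx, h'⟩)))
    obtain ⟨W, hW, d, hdval, hminW, hmaxW⟩ := E1 hn hAπ hAκ hrel hV' huV' hvV' huv hcons
    set C_W := W.image evenEmb with hCWdef
    have hCWmem : C_W ∈ φ'.parts := evenEmb_image_mem hjoin hW
    obtain ⟨B_W, hB_W, x, y, hxmin, hymax, hxB, hyB⟩ := hLl.2 C_W hCWmem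
    have hxval : x = evenEmb u :=
      isMinOf_unique hxmin (isMinOf_image_evenEmb.2 hminW)
    have hyval : y = evenEmb d :=
      isMaxOf_unique hymax (isMaxOf_image_evenEmb.2 hmaxW)
    obtain ⟨D_W, hD_W, hBD⟩ := hG.2.2.2.1 B_W hB_W
    obtain ⟨C'', hC'', hDC''⟩ := hPr D_W hD_W
    have hC''W : C'' = C_W := φ'.eq_of_mem_parts hC'' hCWmem
      (hDC'' (hBD (hxval ▸ hxB))) (hxval ▸ hxmin.1)
    have hDCW : D_W ⊆ C_W := hC''W ▸ hDC''
    have hD_Wne : D_W.Nonempty := parts_nonempty hD_W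
    -- D_W strictly embraces A
    have hDA : D_W ≠ A := by
      rintro rfl
      have := hoA _ (hBD (hxval ▸ hxB))
      simp only [evenEmb_val] at this
      omega
    have hsED : sEmb D_W A := by
      refine ⟨hD_Wne, hAne, ?_, ?_⟩
      · have h1 : (D_W.min' hD_Wne).val ≤ (evenEmb u).val :=
          Finset.min'_le _ _ (hBD (hxval ▸ hxB))
        have h2 : (evenEmb u).val < (A.min' hAne).val := by
          rw [← hαe]
          simp only [evenEmb_val, oddEmb_val]
          have : u.val < α.val := huα
          omega
        exact (by omega : (D_W.min' hD_Wne).val < (A.min' hAne).val)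
      · have h1 : (evenEmb d).val ≤ (D_W.max' hD_Wne).val :=
          Finset.le_max' _ _ (hBD (hyval ▸ hyB))
        have h2 : (A.max' hAne).val < (evenEmb d).val := by
          rw [← hβe]
          simp only [evenEmb_val, oddEmb_val]
          have h3 : β.val < v.val := hvβ
          omega
        exact (by omega : (A.max' hAne).val < (D_W.max' hD_Wne).val)
    obtain ⟨hD_Wne', hPne', hw1, hw2⟩ := hprop D_W hD_W hsED
    -- bound : everything in D_W is at most 2d+1 < max P
    have hbound : (D_W.max' hD_Wne').val ≤ 2 * d.val + 1 := by
      have := hDCW (D_W.max'_mem hD_Wne')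
      rw [hCWdef] at this
      obtain ⟨w, hw, hwe⟩ := Finset.mem_image.1 this
      have : w ≤ d := hmaxW.2 w hw
      have h1 : w.val ≤ d.val := this
      rw [← hwe]
      simp only [evenEmb_val]
      omega
    have hPmax : 2 * v.val ≤ (P.max' hPne').val := by
      have hq₀v : v ≤ q₀ := Finset.min'_le _ q₀ (Finset.mem_filter.2 ⟨hq₀V', hβq₀⟩)
      have h1 : v.val ≤ q₀.val := hq₀v
      have h2 : (P.max' hPne').val = 2 * q₀.val := by
        have e : P.max' hPne' = P.max' hPne := rfl
        rw [e, ← hq₀e]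
        rfl
      omega
    have hfinal : (P.max' hPne').val ≤ (D_W.max' hD_Wne').val := hw2
    omega
  · -- even case
    obtain ⟨W_A, hWA, rfl⟩ := join_block_even hjoin hC_A (hsubA hminA) (heA _ hminA)
    obtain ⟨W_P, hWP, rfl⟩ := join_block_even hjoin hC_P (hsubP hminP) (heP _ hminP)
    have hVV' : W_A ≠ W_P := fun h => hne (by rw [h])
    set α := half (A.min' hAne) with hαdef
    set β := half (A.max' hAne) with hβdef
    have hαe : evenEmb α = A.min' hAne := evenEmb_half (heA _ hminA)
    have hβe : evenEmb β = A.max' hAne := evenEmb_half (heA _ hmaxA)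
    set u₀ := half (P.min' hPne) with hu₀def
    set q₀ := half (P.max' hPne) with hq₀def
    have hu₀e : evenEmb u₀ = P.min' hPne := evenEmb_half (heP _ hminP)
    have hq₀e : evenEmb q₀ = P.max' hPne := evenEmb_half (heP _ hmaxP)
    have hαV : α ∈ W_A := mem_image_evenEmb_iff.1 (by rw [hαe]; exact hsubA hminA)
    have hβV : β ∈ W_A := mem_image_evenEmb_iff.1 (by rw [hβe]; exact hsubA hmaxA)
    have hu₀V' : u₀ ∈ W_P := mem_image_evenEmb_iff.1 (by rw [hu₀e]; exact hsubP hminP)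
    have hq₀V' : q₀ ∈ W_P := mem_image_evenEmb_iff.1 (by rw [hq₀e]; exact hsubP hmaxP)
    have hNCκ : IsNC κ' := kappa_NC hn hNCπ hAπ hAκ hrel
    have hu₀α : u₀ < α := by
      have h1 : (P.min' hPne).val < (A.min' hAne).val := hs1
      show u₀.val < α.val
      rw [← hαe, ← hu₀e] at h1
      simp only [evenEmb_val] at h1
      omega
    have hβq₀ : β < q₀ := by
      have h1 : (A.max' hAne).val < (P.max' hPne).val := hs2
      show β.val < q₀.val
      rw [← hβe, ← hq₀e] at h1
      simp only [evenEmb_val] at h1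
      omega
    have hαβ : α ≤ β := by
      have := A.min'_le _ hmaxA
      have h1 : (A.min' hAne).val ≤ (A.max' hAne).val := this
      show α.val ≤ β.val
      rw [← hαe, ← hβe] at h1
      simp only [evenEmb_val] at h1
      omega
    have hVmid : ∀ q ∈ W_P, ¬(α ≤ q ∧ q ≤ β) := by
      rintro q hq ⟨hq1, hq2⟩
      rcases eq_or_lt_of_le hq1 with heq | hlt1
      · exact hVV' (κ'.eq_of_mem_parts hWA hWP hαV (heq ▸ hq))
      rcases eq_or_lt_of_le hq2 with heq | hlt2
      · exact hVV' (κ'.eq_of_mem_parts hWA hWP hβV (heq ▸ hq))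
      obtain ⟨X, hX, hX1, hX2⟩ := hNCκ u₀ α q β hu₀α hlt1 hlt2
        ⟨W_P, hWP, hu₀V', hq⟩ ⟨W_A, hWA, hαV, hβV⟩
      exact hVV' ((κ'.eq_of_mem_parts hX hWA hX2 hαV) ▸
        (κ'.eq_of_mem_parts hX hWP hX1 hu₀V'))
    have hfu : (W_P.filter (fun x => x < α)).Nonempty :=
      ⟨u₀, Finset.mem_filter.2 ⟨hu₀V', hu₀α⟩⟩
    have hfv : (W_P.filter (fun x => β < x)).Nonempty :=
      ⟨q₀, Finset.mem_filter.2 ⟨hq₀V', hβq₀⟩⟩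
    set u := (W_P.filter (fun x => x < α)).max' hfu with hudef
    set v := (W_P.filter (fun x => β < x)).min' hfv with hvdef
    have humem := Finset.max'_mem _ hfu
    have hvmem := Finset.min'_mem _ hfv
    rw [Finset.mem_filter] at humem hvmem
    obtain ⟨huV', huα⟩ := humem
    obtain ⟨hvV', hvβ⟩ := hvmem
    have huv : u < v := lt_of_lt_of_le huα (le_trans hαβ (le_of_lt hvβ))
    have hcons : ∀ x ∈ W_P, ¬(u < x ∧ x < v) := by
      rintro x hx ⟨hx1, hx2⟩
      rcases lt_trichotomy x α with h | h | h
      · exact absurd hx1 (not_lt_of_ge (Finset.le_max'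
          (W_P.filter (fun y => y < α)) x (Finset.mem_filter.2 ⟨hx, h⟩)))
      · exact hVmid x hx ⟨le_of_eq h.symm, le_trans (le_of_eq h) hαβ⟩
      rcases lt_trichotomy x β with h' | h' | h'
      · exact hVmid x hx ⟨le_of_lt h, le_of_lt h'⟩
      · exact hVmid x hx ⟨le_of_lt h, le_of_eq h'⟩
      · exact absurd hx2 (not_lt_of_ge (Finset.min'_le
          (W_P.filter (fun y => β < y)) x (Finset.mem_filter.2 ⟨hx, h'⟩)))
    obtain ⟨V, hV, s, hsval, hminV, hmaxV⟩ := E1' hn hAπ hAκ hrel hWP huV' hvV' huv hcons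
    set C_V := V.image oddEmb with hCVdef
    have hCVmem : C_V ∈ φ'.parts := oddEmb_image_mem hjoin hV
    obtain ⟨B_V, hB_V, x, y, hxmin, hymax, hxB, hyB⟩ := hLl.2 C_V hCVmem
    have hxval : x = oddEmb s :=
      isMinOf_unique hxmin (isMinOf_image_oddEmb.2 hminV)
    have hyval : y = oddEmb v :=
      isMaxOf_unique hymax (isMaxOf_image_oddEmb.2 hmaxV)
    obtain ⟨D_V, hD_V, hBD⟩ := hG.2.2.2.1 B_V hB_V
    obtain ⟨C'', hC'', hDC''⟩ := hPr D_V hD_V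
    have hC''V : C'' = C_V := φ'.eq_of_mem_parts hC'' hCVmem
      (hDC'' (hBD (hxval ▸ hxB))) (hxval ▸ hxmin.1)
    have hDCV : D_V ⊆ C_V := hC''V ▸ hDC''
    have hD_Vne : D_V.Nonempty := parts_nonempty hD_V
    have hDA : D_V ≠ A := by
      rintro rfl
      have := heA _ (hBD (hxval ▸ hxB))
      simp only [oddEmb_val] at this
      omega
    have hsED : sEmb D_V A := by
      refine ⟨hD_Vne, hAne, ?_, ?_⟩
      · have h1 : (D_V.min' hD_Vne).val ≤ (oddEmb s).val :=
          Finset.min'_le _ _ (hBD (hxval ▸ hxB))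
        have h2 : (oddEmb s).val < (A.min' hAne).val := by
          rw [← hαe]
          simp only [evenEmb_val, oddEmb_val]
          have h3 : u.val < α.val := huα
          rw [hsval]
          omega
        exact (by omega : (D_V.min' hD_Vne).val < (A.min' hAne).val)
      · have h1 : (oddEmb v).val ≤ (D_V.max' hD_Vne).val :=
          Finset.le_max' _ _ (hBD (hyval ▸ hyB))
        have h2 : (A.max' hAne).val < (oddEmb v).val := by
          rw [← hβe]
          simp only [evenEmb_val, oddEmb_val]
          have h3 : β.val < v.val := hvβ
          omega
        exact (by omega : (A.max' hAne).val < (D_V.max' hD_Vne).val)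
    obtain ⟨hD_Vne', hPne', hw1, hw2⟩ := hprop D_V hD_V hsED
    have hbound : (D_V.max' hD_Vne').val ≤ 2 * v.val := by
      have := hDCV (D_V.max'_mem hD_Vne')
      rw [hCVdef] at this
      obtain ⟨w, hw, hwe⟩ := Finset.mem_image.1 this
      have : w ≤ v := hmaxV.2 w hw
      have h1 : w.val ≤ v.val := this
      rw [← hwe]
      simp only [oddEmb_val]
      omega
    have hPmax : 2 * v.val + 1 ≤ (P.max' hPne').val := by
      have hq₀v : v ≤ q₀ := Finset.min'_le _ q₀ (Finset.mem_filter.2 ⟨hq₀V', hβq₀⟩)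
      have h1 : v.val ≤ q₀.val := hq₀v
      have h2 : (P.max' hPne').val = 2 * q₀.val + 1 := by
        have e : P.max' hPne' = P.max' hPne := rfl
        rw [e, ← hq₀e]
        rfl
      omega
    have hfinal : (P.max' hPne').val ≤ (D_V.max' hD_Vne').val := hw2
    omega

end Unique2

/-! ### uniqueness : conclusion -/

lemma parts_subset_eq {k : ℕ} {p q : FP k} (h : p.parts ⊆ q.parts) : p = q := by
  apply Finpartition.ext
  apply Finset.Subset.antisymm h
  intro C hC
  obtain ⟨x, hx⟩ := parts_nonempty hC
  have hb : blk p x ∈ q.parts := h (blk_mem p x)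
  have he : blk p x = C := q.eq_of_mem_parts hb hC (mem_blk p x) hx
  rw [← he]
  exact blk_mem p x

section Unique3

variable {n : ℕ}

lemma evenPart_block_mem {φ : FP (2*n)} (hpar : ParityPreserving φ)
    {W : Finset (Fin n)} (hW : W ∈ (evenPart φ hpar).parts) :
    W.image evenEmb ∈ φ.parts ∧ EvenBlock (W.image evenEmb) := by
  rw [evenPart_parts] at hW
  obtain ⟨B, hB, rfl⟩ := Finset.mem_image.1 hW
  rw [Finset.mem_filter] at hB
  rw [image_evenEmb_half hB.2]
  exact hB

lemma unique_main (hn : 0 < n) {θ : FP (2*n)} (hGθ : Good θ θ)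
    {π' κ' : FP n} {σπ' σκ' : Equiv.Perm (Fin n)} (hNCπ : IsNC π')
    (hAπ : IsAssocPerm π' σπ') (hAκ : IsAssocPerm κ' σκ')
    (hrel : σκ' = σπ'⁻¹ * finRotate n)
    {φ' : FP (2*n)} (hjoin : IsOddEvenJoin π' κ' φ') (hLl : Ll θ φ')
    (hpc : ParityPreserving (close θ)) :
    π' = oddPart (close θ) hpc := by
  have hm : 0 < 2*n := by omega
  have heven : (2*n) % 2 = 0 := by omega
  obtain ⟨hGφ, hnm⟩ := close_good hm heven hGθ
  obtain ⟨hNCφ, hparφ, h2φ, hrefθφ, hmmφ⟩ := hGφ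
  have hrefφ : ∀ B ∈ (close θ).parts, ∃ C ∈ φ'.parts, B ⊆ C := by
    refine close_pres (fun ψ => ∀ B ∈ ψ.parts, ∃ C ∈ φ'.parts, B ⊆ C) hm heven
      ?_ θ.parts.card θ le_rfl hGθ hLl.1
    intro ψ A P hmp hG hPr
    exact step_refines hn hNCπ hAπ hAκ hrel hjoin hLl hmp hG hPr
  set φ := close θ with hφdef
  have hAπ_our := assocPerm_isAssoc (oddPart φ hpc)
  have hAκ_our := crux hn hNCφ hpc h2φ hnm
  apply parts_subset_eq
  intro V hV
  -- the image block of V in φ'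
  set C := V.image oddEmb with hCdef
  have hC : C ∈ φ'.parts := oddEmb_image_mem hjoin hV
  obtain ⟨B, hB, x, y, hxmin, hymax, hxB, hyB⟩ := hLl.2 C hC
  have hVne : V.Nonempty := by
    obtain ⟨z, hz⟩ := parts_nonempty hC
    obtain ⟨v0, hv0, -⟩ := Finset.mem_image.1 hz
    exact ⟨v0, hv0⟩
  have hxval : x = oddEmb (V.min' hVne) :=
    isMinOf_unique hxmin (isMinOf_image_oddEmb.2 (isMinOf_min' hVne))
  have hyval : y = oddEmb (V.max' hVne) :=
    isMaxOf_unique hymax (isMaxOf_image_oddEmb.2 (isMaxOf_max' hVne))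
  obtain ⟨D, hD, hBD⟩ := hrefθφ B hB
  have hDC : D ⊆ C := by
    obtain ⟨C'', hC'', hsub''⟩ := hrefφ D hD
    have : C'' = C := φ'.eq_of_mem_parts hC'' hC (hsub'' (hBD hxB)) hxmin.1
    exact this ▸ hsub''
  have hDodd : OddBlock D := by
    rcases hpc D hD with h | h
    · exact h
    · exfalso
      have := h x (hBD hxB)
      rw [hxval] at this
      simp only [oddEmb_val] at this
      omega
  set VD := D.image half with hVDdef
  have hVDmem : VD ∈ (oddPart φ hpc).parts := by
    rw [oddPart_parts]
    exact Finset.mem_image_of_mem _ (Finset.mem_filter.2 ⟨hD, hDodd⟩)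
  -- V = VD
  suffices hEQ : V = VD by rw [hEQ]; exact hVDmem
  apply Finset.Subset.antisymm
  · -- V ⊆ VD
    intro ξ hξ
    by_contra hξVD
    have hminVD : V.min' hVne ∈ VD := by
      rw [hVDdef, mem_image_half_iff_odd hDodd, ← hxval]
      exact hBD hxB
    have hmaxVD : V.max' hVne ∈ VD := by
      rw [hVDdef, mem_image_half_iff_odd hDodd, ← hyval]
      exact hBD hyB
    have hlt1 : V.min' hVne < ξ := by
      rcases eq_or_lt_of_le (V.min'_le ξ hξ) with heq | hlt
      · exact absurd (heq ▸ hminVD) hξVD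
      · exact hlt
    have hlt2 : ξ < V.max' hVne := by
      rcases eq_or_lt_of_le (V.le_max' ξ hξ) with heq | hlt
      · exact absurd (heq ▸ hmaxVD) hξVD
      · exact hlt
    have hfw : (VD.filter (fun q => q < ξ)).Nonempty :=
      ⟨V.min' hVne, Finset.mem_filter.2 ⟨hminVD, hlt1⟩⟩
    have hfv : (VD.filter (fun q => ξ < q)).Nonempty :=
      ⟨V.max' hVne, Finset.mem_filter.2 ⟨hmaxVD, hlt2⟩⟩
    set w := (VD.filter (fun q => q < ξ)).max' hfw with hwdef
    set v := (VD.filter (fun q => ξ < q)).min' hfv with hvdef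
    have hwmem := Finset.max'_mem _ hfw
    have hvmem := Finset.min'_mem _ hfv
    rw [Finset.mem_filter] at hwmem hvmem
    obtain ⟨hwVD, hwξ⟩ := hwmem
    obtain ⟨hvVD, hξv⟩ := hvmem
    have hwv : w < v := lt_trans hwξ hξv
    have hcons : ∀ q ∈ VD, ¬(w < q ∧ q < v) := by
      rintro q hq ⟨hq1, hq2⟩
      rcases lt_trichotomy q ξ with h | h | h
      · exact absurd hq1 (not_lt_of_ge (Finset.le_max'
          (VD.filter (fun r => r < ξ)) q (Finset.mem_filter.2 ⟨hq, h⟩)))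
      · exact hξVD (h ▸ hq)
      · exact absurd hq2 (not_lt_of_ge (Finset.min'_le
          (VD.filter (fun r => ξ < r)) q (Finset.mem_filter.2 ⟨hq, h⟩)))
    obtain ⟨W₀, hW₀, d₀, hd₀val, hminW₀, hmaxW₀⟩ :=
      E1 hn hAπ_our hAκ_our rfl hVDmem hwVD hvVD hwv hcons
    obtain ⟨hEmem, hEeven⟩ := evenPart_block_mem hpc hW₀
    obtain ⟨C_E, hC_E, hsubE⟩ := hrefφ (W₀.image evenEmb) hEmem
    have hwC_E : evenEmb w ∈ C_E := hsubE (mem_image_evenEmb_iff.2 hminW₀.1)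
    obtain ⟨W', hW', rfl⟩ := join_block_even hjoin hC_E hwC_E (by simp only [evenEmb_val]; omega)
    have hwW' : w ∈ W' := mem_image_evenEmb_iff.1 hwC_E
    have hd₀W' : d₀ ∈ W' :=
      mem_image_evenEmb_iff.1 (hsubE (mem_image_evenEmb_iff.2 hmaxW₀.1))
    refine pattern1 hn hNCπ hAπ hAκ hrel hV hW' (V.min'_mem hVne) hξ hwW' hd₀W'
      ?_ hwξ ?_
    · exact Finset.le_max' (VD.filter (fun r => r < ξ)) _
        (Finset.mem_filter.2 ⟨hminVD, hlt1⟩)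
    · show ξ.val ≤ d₀.val
      have h1 : ξ.val < v.val := hξv
      omega
  · -- VD ⊆ V
    intro a ha
    rw [hVDdef, mem_image_half_iff_odd hDodd] at ha
    exact mem_image_oddEmb_iff.1 (hDC ha)

end Unique3


/-- Proposition 6.10: if `θ` is a parity-preserving partition in
`NC(2n)` with exactly two outer blocks, then there is a unique `π ∈ NC(n)` such that
`θ ≪ π^(odd) ∪ K(π)^(even)`. -/
theorem statement17 (n : ℕ) (hn : 0 < n) (θ : FP (2*n)) (hθNC : IsNC θ)
    (hθpar : ParityPreserving θ) (h2 : ExactlyTwoOuterBlocks θ) :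
    (∃ π κ : FP n, IsNC π ∧ IsKrewerasPair π κ ∧
      ∃ φ : FP (2*n), IsOddEvenJoin π κ φ ∧ Ll θ φ) ∧
    (∀ π₁ κ₁ π₂ κ₂ : FP n, IsNC π₁ → IsKrewerasPair π₁ κ₁ →
      IsNC π₂ → IsKrewerasPair π₂ κ₂ →
      (∃ φ : FP (2*n), IsOddEvenJoin π₁ κ₁ φ ∧ Ll θ φ) →
      (∃ φ : FP (2*n), IsOddEvenJoin π₂ κ₂ φ ∧ Ll θ φ) → π₁ = π₂) := by
  have hm : 0 < 2*n := by omega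
  have heven : (2*n) % 2 = 0 := by omega
  have hGθ : Good θ θ := by
    refine ⟨hθNC, hθpar, h2, fun B hB => ⟨B, hB, Finset.Subset.refl B⟩, fun C hC => ?_⟩
    exact ⟨C, hC, C.min' (parts_nonempty hC), C.max' (parts_nonempty hC),
      isMinOf_min' _, isMaxOf_max' _, Finset.min'_mem _ _, Finset.max'_mem _ _⟩
  obtain ⟨hGφ, hnm⟩ := close_good hm heven hGθ
  obtain ⟨hNCφ, hparφ, h2φ, href, hmm⟩ := hGφ
  constructor
  · exact ⟨oddPart (close θ) hparφ, evenPart (close θ) hparφ,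
      oddPart_NC hparφ hNCφ,
      ⟨assocPerm (oddPart (close θ) hparφ),
        (assocPerm (oddPart (close θ) hparφ))⁻¹ * finRotate n,
        assocPerm_isAssoc _, crux hn hNCφ hparφ h2φ hnm, rfl⟩,
      close θ, oddEven_join hparφ, href, hmm⟩
  · rintro π₁ κ₁ π₂ κ₂ h1NC hK1 h2NC hK2 ⟨φ₁, hjoin₁, hLl₁⟩ ⟨φ₂, hjoin₂, hLl₂⟩
    obtain ⟨σπ₁, σκ₁, hA1, hB1, hrel₁⟩ := hK1
    obtain ⟨σπ₂, σκ₂, hA2, hB2, hrel₂⟩ := hK2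
    rw [unique_main hn hGθ h1NC hA1 hB1 hrel₁ hjoin₁ hLl₁ hparφ,
        unique_main hn hGθ h2NC hA2 hB2 hrel₂ hjoin₂ hLl₂ hparφ]
end BBP
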